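/- arXiv:1604.01079 — 4 statements merged into one kernel-verified Lean document; each statement's English description precedes it below -/
import Mathlib

section
/- Let E be a directed graph and c a cycle without exits. Let H be the saturated closure of the set c^0 of vertices on c. Then the following are equivalent: (i) the set F_E(c^0) of paths arriving at c^0 for the first time is finite; (ii) H satisfies Condition (F) and B_H = ∅. -/
/-- A directed graph: vertices, edges, source and range maps. -/
structure DirGraph where
  V : Type
  E : Type
  s : E → V
  r : E → V

/-- A walk: a candidate finite path, given by a source vertex and a list of edges. -/
structure Walk (G : DirGraph) where
  src : G.V
  edges : List G.E

/-- The range (final vertex) of a walk. -/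
def Walk.rng {G : DirGraph} (p : Walk G) : G.V :=
  match p.edges.getLast? with
  | none => p.src
  | some e => G.r e

/-- Appending two walks. -/
def Walk.append {G : DirGraph} (p q : Walk G) : Walk G := ⟨p.src, p.edges ++ q.edges⟩

/-- The `n`-fold power of a walk (concatenation with itself). -/
def Walk.pow {G : DirGraph} (c : Walk G) (n : ℕ) : Walk G :=
  ⟨c.src, (List.replicate n c.edges).flatten⟩

namespace DirGraph
variable (G : DirGraph)

/-- A walk is a genuine finite path: the first edge starts at the source and
consecutive edges match up. -/
def IsPath (p : Walk G) : Prop :=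
  (∀ e, p.edges.head? = some e → G.s e = p.src) ∧
    p.edges.Chain' (fun a b => G.r a = G.s b)

/-- A subset of vertices is hereditary. -/
def Hereditary (H : Set G.V) : Prop :=
  ∀ p : Walk G, G.IsPath p → p.src ∈ H → p.rng ∈ H

/-- A regular vertex: emits at least one and finitely many edges. -/
def Regular (v : G.V) : Prop :=
  {e | G.s e = v}.Finite ∧ {e | G.s e = v}.Nonempty

/-- A subset of vertices is saturated. -/
def Saturated (H : Set G.V) : Prop :=
  ∀ v, G.Regular v → (∀ e, G.s e = v → G.r e ∈ H) → v ∈ H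

/-- The saturated closure: the smallest hereditary and saturated set containing `H`. -/
def satClosure (H : Set G.V) : Set G.V :=
  ⋂₀ {K | H ⊆ K ∧ G.Hereditary K ∧ G.Saturated K}

/-- The set of vertices of a walk (sources of its edges). -/
def verts (c : Walk G) : Set G.V := {v | ∃ e ∈ c.edges, G.s e = v}

/-- A cycle: a nontrivial closed path with no repeated vertices except the base. -/
def IsCycle (c : Walk G) : Prop :=
  G.IsPath c ∧ c.edges ≠ [] ∧ c.rng = c.src ∧ (c.edges.map G.s).Nodup

/-- A cycle (or walk) has no exits: each vertex on it emits only the edge of the walk. -/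
def NoExits (c : Walk G) : Prop :=
  ∀ e ∈ c.edges, ∀ e', G.s e' = G.s e → e' = e

/-- `F_E(H)`: paths reaching `H` exactly at their final vertex. -/
def FE (H : Set G.V) : Set (Walk G) :=
  {α | G.IsPath α ∧ α.edges ≠ [] ∧ α.src ∉ H ∧
       (∀ e ∈ α.edges.dropLast, G.r e ∉ H) ∧ α.rng ∈ H}

/-- The breaking vertices of `H`. -/
def BH (H : Set G.V) : Set G.V :=
  {v | v ∉ H ∧ {e | G.s e = v}.Infinite ∧
       {e | G.s e = v ∧ G.r e ∉ H}.Nonempty ∧ {e | G.s e = v ∧ G.r e ∉ H}.Finite}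

/-- `F_E'(H)`: members of `F_E(H)` whose last edge has source not a breaking vertex. -/
def FE' (H : Set G.V) : Set (Walk G) :=
  {α | α ∈ G.FE H ∧ ∀ e, α.edges.getLast? = some e → G.s e ∉ G.BH H}

/-- Condition (F): `H ∪ F_E'(H) ∪ {α ∈ Path(E) : r(α) ∈ B_H}` is finite. -/
def ConditionF (H : Set G.V) : Prop :=
  H.Finite ∧ (G.FE' H).Finite ∧ {α : Walk G | G.IsPath α ∧ α.rng ∈ G.BH H}.Finite

/-- An infinite path, given by its sequence of edges. -/
def IsInfPath (x : ℕ → G.E) : Prop := ∀ i, G.r (x i) = G.s (x (i + 1))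

/-- The edge sequence of the concatenation of a finite walk with an infinite edge sequence. -/
def concatSeq (p : Walk G) (x : ℕ → G.E) : ℕ → G.E := fun n =>
  if h : n < p.edges.length then p.edges.get ⟨n, h⟩ else x (n - p.edges.length)

end DirGraph
section Aux
variable {G : DirGraph}

lemma rng_nil (v : G.V) : Walk.rng (⟨v, []⟩ : Walk G) = v := rfl

lemma rng_of_getLast {p : Walk G} {e : G.E} (h : p.edges.getLast? = some e) :
    p.rng = G.r e := by simp [Walk.rng, h]

lemma rng_cons (v : G.V) (e : G.E) (l : List G.E) :
    Walk.rng (⟨v, e :: l⟩ : Walk G) = Walk.rng (⟨G.r e, l⟩ : Walk G) := by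
  rcases List.eq_nil_or_concat l with rfl | ⟨l', b, rfl⟩
  · rfl
  · have h1 : (e :: (l' ++ [b])).getLast? = some b := by
      rw [← List.cons_append]; exact List.getLast?_concat
    simp [Walk.rng, h1, List.getLast?_concat]

lemma rng_append_ne {v w : G.V} : ∀ (l₁ : List G.E) {l₂ : List G.E}, l₂ ≠ [] →
    Walk.rng (⟨v, l₁ ++ l₂⟩ : Walk G) = Walk.rng (⟨w, l₂⟩ : Walk G) := by
  intro l₁ l₂ h
  rcases List.eq_nil_or_concat l₂ with rfl | ⟨l', b, rfl⟩
  · exact absurd rfl h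
  · have h1 : (l₁ ++ (l' ++ [b])).getLast? = some b := by
      rw [← List.append_assoc]; exact List.getLast?_concat
    simp [Walk.rng, h1, List.getLast?_concat]

lemma isPath_nil (v : G.V) : G.IsPath ⟨v, []⟩ := ⟨by simp, List.isChain_nil⟩

lemma isPath_tail {e : G.E} {l : List G.E} {v : G.V} (h : G.IsPath ⟨v, e :: l⟩) :
    G.s e = v ∧ G.IsPath ⟨G.r e, l⟩ := by
  obtain ⟨h1, h2⟩ := h
  refine ⟨h1 e rfl, ?_, (List.isChain_cons.mp h2).2⟩
  intro e' he'
  exact ((List.isChain_cons.mp h2).1 e' he').symm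

lemma isPath_cons {e : G.E} {p : Walk G} (hp : G.IsPath p) (h : G.r e = p.src) :
    G.IsPath ⟨G.s e, e :: p.edges⟩ := by
  refine ⟨by simp, List.isChain_cons.mpr ⟨?_, hp.2⟩⟩
  intro b hb
  rw [hp.1 b hb]; exact h

lemma isPath_prefix : ∀ (l₁ : List G.E) {l₂ : List G.E} {v : G.V},
    G.IsPath ⟨v, l₁ ++ l₂⟩ → G.IsPath ⟨v, l₁⟩
  | [], _, v, _ => isPath_nil v
  | a :: t, l₂, v, h => by
    have h' := isPath_tail (show G.IsPath ⟨v, a :: (t ++ l₂)⟩ from h)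
    have h2 := isPath_cons (isPath_prefix t h'.2) rfl
    rwa [h'.1] at h2

lemma isPath_suffix : ∀ (l₁ : List G.E) {e : G.E} {l₂ : List G.E} {v : G.V},
    G.IsPath ⟨v, l₁ ++ e :: l₂⟩ → G.IsPath ⟨G.r e, l₂⟩
  | [], e, l₂, v, h => (isPath_tail h).2
  | a :: t, e, l₂, v, h =>
    isPath_suffix t (isPath_tail (show G.IsPath ⟨v, a :: (t ++ e :: l₂)⟩ from h)).2

lemma isPath_append : ∀ (l : List G.E) (v : G.V) {q : Walk G}, G.IsPath ⟨v, l⟩ →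
    G.IsPath q → q.src = Walk.rng (⟨v, l⟩ : Walk G) → G.IsPath ⟨v, l ++ q.edges⟩
  | [], v, q, _, hq, h => by
    obtain ⟨w, m⟩ := q
    simp only [rng_nil] at h
    subst h
    simpa using hq
  | a :: t, v, q, hp, hq, h => by
    have h1 := isPath_tail hp
    have h2 := isPath_append t (G.r a) h1.2 hq (by rw [h, rng_cons])
    have h3 := isPath_cons h2 rfl
    rwa [h1.1] at h3

lemma sources : ∀ (l : List G.E) (v : G.V), G.IsPath ⟨v, l⟩ → ∀ e' ∈ l,
    G.s e' = v ∨ ∃ e ∈ l.dropLast, G.r e = G.s e'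
  | a :: t, v, hp, e', he' => by
    rcases List.mem_cons.mp he' with rfl | ht
    · exact Or.inl (isPath_tail hp).1
    · have h1 := isPath_tail hp
      have hne : t ≠ [] := by rintro rfl; simp at ht
      obtain ⟨b, t', rfl⟩ := List.exists_cons_of_ne_nil hne
      rcases sources _ (G.r a) h1.2 e' ht with h | ⟨e, he, hee⟩
      · exact Or.inr ⟨a, by simp [List.dropLast_cons₂], by rw [h]⟩
      · exact Or.inr ⟨e, by simp [List.dropLast_cons₂]; right; simpa using he, hee⟩

lemma mem_dropLast_or_getLast : ∀ {l : List G.E} {e : G.E}, e ∈ l →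
    e ∈ l.dropLast ∨ l.getLast? = some e
  | [a], e, he => by simp at he; simp [he]
  | a :: b :: t, e, he => by
    rcases List.mem_cons.mp he with rfl | ht
    · exact Or.inl (by simp [List.dropLast_cons₂])
    · rcases mem_dropLast_or_getLast ht with h | h
      · exact Or.inl (by simp [List.dropLast_cons₂]; right; simpa using h)
      · exact Or.inr (by rwa [List.getLast?_cons_cons])

/-- Edge-hereditary. -/
def EH (G : DirGraph) (K : Set G.V) : Prop := ∀ e : G.E, G.s e ∈ K → G.r e ∈ K

lemma eh_rng {K : Set G.V} (h : EH G K) : ∀ (l : List G.E) (v : G.V),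
    G.IsPath ⟨v, l⟩ → v ∈ K → Walk.rng (⟨v, l⟩ : Walk G) ∈ K
  | [], v, _, hv => hv
  | a :: t, v, hp, hv => by
    rw [rng_cons]
    exact eh_rng h t (G.r a)
      (isPath_tail hp).2 (h a (by rw [(isPath_tail hp).1]; exact hv))

lemma eh_hereditary {K : Set G.V} (h : EH G K) : G.Hereditary K := by
  rintro ⟨v, l⟩ hp hv
  exact eh_rng h l v hp hv

/-- The stages of the saturated closure. -/
def stage (G : DirGraph) (X : Set G.V) : ℕ → Set G.V
  | 0 => X
  | n + 1 => stage G X n ∪ {v | G.Regular v ∧ ∀ e, G.s e = v → G.r e ∈ stage G X n}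

lemma stage_mono {X : Set G.V} : ∀ {m n : ℕ}, m ≤ n → stage G X m ⊆ stage G X n := by
  intro m n h
  induction n, h using Nat.le_induction with
  | base => exact subset_rfl
  | succ n _ ih => exact ih.trans Set.subset_union_left

lemma stage_eh {X : Set G.V} (hX : EH G X) : ∀ n, EH G (stage G X n)
  | 0 => hX
  | n + 1 => by
    rintro e (h | ⟨_, hall⟩)
    · exact Set.subset_union_left (stage_eh hX n e h)
    · exact Set.subset_union_left (hall e rfl)

lemma exists_bound {α : Type*} {S : Set α} (hS : S.Finite) (P : α → ℕ → Prop)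
    (hmono : ∀ a m n, m ≤ n → P a m → P a n) :
    (∀ a ∈ S, ∃ n, P a n) → ∃ N, ∀ a ∈ S, P a N := by
  refine Set.Finite.induction_on (motive := fun s _ => (∀ a ∈ s, ∃ n, P a n) → ∃ N, ∀ a ∈ s, P a N) S hS (fun _ => ⟨0, by simp⟩) ?_
  rintro a s _ _ ih h
  obtain ⟨na, hna⟩ := h a (Set.mem_insert a s)
  obtain ⟨N, hN⟩ := ih fun b hb => h b (Set.mem_insert_of_mem a hb)
  refine ⟨max na N, ?_⟩
  rintro b (rfl | hb)
  · exact hmono b na _ (le_max_left _ _) hna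
  · exact hmono b N _ (le_max_right _ _) (hN b hb)

lemma iUnion_stage_saturated {X : Set G.V} : G.Saturated (⋃ n, stage G X n) := by
  intro v hreg hall
  obtain ⟨N, hN⟩ := exists_bound hreg.1 (fun e n => G.r e ∈ stage G X n)
    (fun e m n hmn => fun h => stage_mono hmn h)
    (fun e he => by simpa using hall e he)
  exact Set.mem_iUnion.mpr ⟨N + 1, Or.inr ⟨hreg, fun e he => hN e he⟩⟩

lemma iUnion_stage_eh {X : Set G.V} (hX : EH G X) : EH G (⋃ n, stage G X n) := by
  intro e he
  obtain ⟨n, hn⟩ := Set.mem_iUnion.mp he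
  exact Set.mem_iUnion.mpr ⟨n, stage_eh hX n e hn⟩

lemma subset_satClosure {X : Set G.V} : X ⊆ G.satClosure X :=
  fun v hv => Set.mem_sInter.mpr fun _ hK => hK.1 hv

lemma satClosure_saturated {X : Set G.V} : G.Saturated (G.satClosure X) := by
  intro v hreg hall
  refine Set.mem_sInter.mpr fun K hK => ?_
  exact hK.2.2 v hreg fun e he => Set.mem_sInter.mp (hall e he) K hK

lemma stage_subset_satClosure {X : Set G.V} : ∀ n, stage G X n ⊆ G.satClosure X
  | 0 => subset_satClosure
  | n + 1 => by
    rintro v (h | ⟨hreg, hall⟩)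
    · exact stage_subset_satClosure n h
    · exact satClosure_saturated v hreg fun e he => stage_subset_satClosure n (hall e he)

lemma satClosure_eq_iUnion_stage {X : Set G.V} (hX : EH G X) :
    G.satClosure X = ⋃ n, stage G X n := by
  apply subset_antisymm
  · exact Set.sInter_subset_of_mem
      ⟨fun v hv => Set.mem_iUnion.mpr ⟨0, hv⟩,
       eh_hereditary (iUnion_stage_eh hX), iUnion_stage_saturated⟩
  · exact Set.iUnion_subset stage_subset_satClosure

/-- Length bound for paths avoiding `X` starting in `stage n`. -/
lemma len_le {X : Set G.V} : ∀ (n : ℕ) (l : List G.E) (v : G.V), v ∈ stage G X n →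
    G.IsPath ⟨v, l⟩ → (∀ e ∈ l, G.s e ∉ X) → l.length ≤ n
  | 0, [], _, _, _, _ => le_rfl
  | 0, a :: t, v, hv, hp, hs => absurd ((isPath_tail hp).1 ▸ hv) (hs a (by simp))
  | n + 1, l, v, hv, hp, hs => by
    rcases hv with hv | ⟨_, hall⟩
    · exact (len_le n l v hv hp hs).trans (Nat.le_succ n)
    · cases l with
      | nil => simp
      | cons a t =>
        have h1 := isPath_tail hp
        have := len_le n t (G.r a) (hall a h1.1) h1.2 fun e he => hs e (by simp [he])
        simpa using this

/-- Finiteness of bounded-length paths inside a finitely-branching edge-hereditary set. -/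
lemma paths_finite {K : Set G.V} (hK : EH G K) (hfb : ∀ v ∈ K, {e | G.s e = v}.Finite) :
    ∀ (n : ℕ) (v : G.V), v ∈ K →
      {p : Walk G | G.IsPath p ∧ p.src = v ∧ p.edges.length ≤ n}.Finite
  | 0, v, _ => by
    refine Set.Finite.subset (Set.finite_singleton (⟨v, []⟩ : Walk G)) ?_
    rintro ⟨w, l⟩ ⟨_, rfl, hlen⟩
    simp only [Nat.le_zero, List.length_eq_zero_iff] at hlen
    simp [hlen]
  | n + 1, v, hv => by
    have hsub : {p : Walk G | G.IsPath p ∧ p.src = v ∧ p.edges.length ≤ n + 1} ⊆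
        insert (⟨v, []⟩ : Walk G)
          (⋃ e ∈ {e : G.E | G.s e = v}, (fun q : Walk G => (⟨v, e :: q.edges⟩ : Walk G)) ''
            {p : Walk G | G.IsPath p ∧ p.src = G.r e ∧ p.edges.length ≤ n}) := by
      rintro ⟨w, l⟩ ⟨hp, rfl, hlen⟩
      cases l with
      | nil => exact Set.mem_insert _ _
      | cons a t =>
        refine Set.mem_union_right _ ?_
        refine Set.mem_biUnion (show a ∈ {e : G.E | G.s e = w} from (isPath_tail hp).1) ?_
        exact ⟨⟨G.r a, t⟩, ⟨(isPath_tail hp).2, rfl, Nat.succ_le_succ_iff.mp (by simpa using hlen)⟩, rfl⟩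
    refine Set.Finite.subset (Set.Finite.insert _ (Set.Finite.biUnion (hfb v hv) ?_)) hsub
    intro e he
    exact Set.Finite.image _ (paths_finite hK hfb n (G.r e) (hK e (show G.s e ∈ K by rw [he]; exact hv)))
lemma stage_fb {X : Set G.V} (hXfb : ∀ v ∈ X, {e | G.s e = v}.Finite) :
    ∀ (n : ℕ) (v : G.V), v ∈ stage G X n → {e | G.s e = v}.Finite
  | 0, v, hv => hXfb v hv
  | n + 1, v, hv => by
    rcases hv with hv | ⟨hreg, _⟩
    · exact stage_fb hXfb n v hv
    · exact hreg.1

lemma cycle_r_mem {c : Walk G} (hc : G.IsCycle c) : ∀ e ∈ c.edges, G.r e ∈ G.verts c := by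
  intro e he
  obtain ⟨⟨i, hi⟩, hget⟩ := List.mem_iff_get.mp he
  by_cases h : i + 1 < c.edges.length
  · have hch := List.isChain_iff_getElem.mp hc.1.2 i (by omega)
    refine ⟨c.edges.get ⟨i + 1, h⟩, List.get_mem _ _, ?_⟩
    rw [← hget]; exact hch.symm
  · have hnil := hc.2.1
    have hlen : i = c.edges.length - 1 := by
      have := List.length_pos_iff.mpr hnil
      omega
    subst hlen
    have hlast : c.edges.getLast hnil = e := by
      rw [List.getLast_eq_getElem]; exact hget
    have h1 : c.rng = G.r e := by
      refine rng_of_getLast (p := c) ?_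
      rw [← hlast]
      exact List.getLast?_eq_getLast hnil
    obtain ⟨a, t, hat⟩ := List.exists_cons_of_ne_nil hnil
    have hsa : G.s a = c.src := hc.1.1 a (by rw [hat]; rfl)
    refine ⟨a, by rw [hat]; simp, ?_⟩
    rw [hsa, ← hc.2.2.1, h1]

lemma verts_eh {c : Walk G} (hc : G.IsCycle c) (hne : G.NoExits c) : EH G (G.verts c) := by
  rintro e₀ ⟨e, he, hse⟩
  have he₀ : e₀ = e := hne e he e₀ hse.symm
  rw [he₀]
  exact cycle_r_mem hc e he

lemma verts_finite {c : Walk G} : (G.verts c).Finite := by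
  have h : G.verts c = G.s '' {e | e ∈ c.edges} := rfl
  rw [h]
  exact (c.edges.finite_toSet).image G.s

lemma verts_fb {c : Walk G} (hne : G.NoExits c) :
    ∀ v ∈ G.verts c, {e | G.s e = v}.Finite := by
  rintro v ⟨e, he, rfl⟩
  refine Set.Finite.subset (Set.finite_singleton e) ?_
  intro e' he'
  exact hne e he e' he'

/-- A good path from `w`: a first-hit path into `X`. -/
def Good (G : DirGraph) (X : Set G.V) (w : G.V) (p : Walk G) : Prop :=
  G.IsPath p ∧ p.src = w ∧ p.rng ∈ X ∧ (∀ e ∈ p.edges.dropLast, G.r e ∉ X) ∧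
    (p.edges = [] ↔ w ∈ X)

lemma good_exists {X : Set G.V} : ∀ (n : ℕ) (w : G.V), w ∈ stage G X n →
    ∃ p, Good G X w p := by
  intro n
  induction n with
  | zero =>
    intro w hw
    exact ⟨⟨w, []⟩, isPath_nil w, rfl, hw, by simp, by simpa [stage] using hw⟩
  | succ n ih =>
    intro w hw
    by_cases hwX : w ∈ X
    · exact ⟨⟨w, []⟩, isPath_nil w, rfl, hwX, by simp, by simpa using hwX⟩
    rcases hw with hw | ⟨hreg, hall⟩
    · exact ih w hw
    · obtain ⟨e, he⟩ := hreg.2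
      obtain ⟨p, hp, hsrc, hrng, hdl, hiff⟩ := ih (G.r e) (hall e he)
      refine ⟨⟨w, e :: p.edges⟩, ?_, rfl, ?_, ?_, by simp [hwX]⟩
      · have h1 := isPath_cons hp hsrc.symm
        rwa [he] at h1
      · rw [rng_cons, ← hsrc]
        exact hrng
      · cases hpe : p.edges with
        | nil => simp [hpe]
        | cons a t =>
          rw [hpe] at hdl hiff
          rw [List.dropLast_cons₂]
          intro e' he'
          rcases List.mem_cons.mp he' with rfl | h'
          · intro hX
            exact (List.cons_ne_nil a t) (hiff.mpr hX)
          · exact hdl e' h'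

open Classical in
noncomputable def gp (G : DirGraph) (X : Set G.V) (w : G.V) : Walk G :=
  if h : ∃ p, Good G X w p then h.choose else ⟨w, []⟩

lemma gp_good {X : Set G.V} {w : G.V} (h : ∃ p, Good G X w p) :
    Good G X w (gp G X w) := by
  rw [gp, dif_pos h]
  exact h.choose_spec

lemma gp_mem_FE {X : Set G.V} {w : G.V} (h : ∃ p, Good G X w p) (hw : w ∉ X) :
    gp G X w ∈ G.FE X := by
  obtain ⟨hp, hsrc, hrng, hdl, hiff⟩ := gp_good h
  exact ⟨hp, fun hn => hw (hiff.mp hn), by rw [hsrc]; exact hw, hdl, hrng⟩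

lemma cons_gp_mem_FE {X : Set G.V} {e : G.E} (h : ∃ p, Good G X (G.r e) p)
    (hs : G.s e ∉ X) :
    (⟨G.s e, e :: (gp G X (G.r e)).edges⟩ : Walk G) ∈ G.FE X := by
  have hg := gp_good h
  set p := gp G X (G.r e) with hpdef
  obtain ⟨hp, hsrc, hrng, hdl, hiff⟩ := hg
  refine ⟨isPath_cons hp hsrc.symm, by simp, hs, ?_, ?_⟩
  · cases hpe : p.edges with
    | nil => simp [hpe]
    | cons a t =>
      rw [hpe] at hdl hiff
      rw [List.dropLast_cons₂]
      intro e' he'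
      rcases List.mem_cons.mp he' with rfl | h'
      · intro hX
        exact (List.cons_ne_nil a t) (hiff.mpr hX)
      · exact hdl e' h'
  · rw [rng_cons, ← hsrc]
    exact hrng

lemma split_first (H' : Set G.V) : ∀ (l : List G.E), (∃ e ∈ l, G.r e ∈ H') →
    ∃ l₁ e l₂, l = l₁ ++ e :: l₂ ∧ G.r e ∈ H' ∧ ∀ e' ∈ l₁, G.r e' ∉ H'
  | [], h => absurd h (by simp)
  | a :: t, h => by
    by_cases ha : G.r a ∈ H'
    · exact ⟨[], a, t, rfl, ha, by simp⟩
    · obtain ⟨l₁, e, l₂, ht, he, hl₁⟩ := split_first H' t (by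
        rcases h with ⟨e, he, hh⟩
        rcases List.mem_cons.mp he with rfl | h'
        · exact absurd hh ha
        · exact ⟨e, h', hh⟩)
      refine ⟨a :: l₁, e, l₂, by rw [ht]; rfl, he, ?_⟩
      intro e' he'
      rcases List.mem_cons.mp he' with rfl | h'
      · exact ha
      · exact hl₁ e' h'

lemma split_unique (H' : Set G.V) : ∀ (l₁ l₂ t₁ t₂ : List G.E), l₁ ++ t₁ = l₂ ++ t₂ →
    l₁ ≠ [] → l₂ ≠ [] →
    (∀ e ∈ l₁.dropLast, G.r e ∉ H') → (∀ e ∈ l₂.dropLast, G.r e ∉ H') →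
    (∀ e, l₁.getLast? = some e → G.r e ∈ H') → (∀ e, l₂.getLast? = some e → G.r e ∈ H') →
    l₁ = l₂
  | [], _, _, _, _, h, _, _, _, _, _ => absurd rfl h
  | _ :: _, [], _, _, _, _, h, _, _, _, _ => absurd rfl h
  | a :: as, b :: bs, t₁, t₂, heq, _, _, h1, h2, g1, g2 => by
    have hab : a = b ∧ as ++ t₁ = bs ++ t₂ := by
      rw [List.cons_append, List.cons_append] at heq
      exact ⟨(List.cons.injEq _ _ _ _).mp heq |>.1, (List.cons.injEq _ _ _ _).mp heq |>.2⟩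
    obtain ⟨rfl, heq'⟩ := hab
    cases has : as with
    | nil =>
      cases hbs : bs with
      | nil => rfl
      | cons b' bs' =>
        exfalso
        have hra : G.r a ∈ H' := g1 a (by rw [has]; rfl)
        have : G.r a ∉ H' := h2 a (by rw [hbs, List.dropLast_cons₂]; simp)
        exact this hra
    | cons a' as' =>
      cases hbs : bs with
      | nil =>
        exfalso
        have hrb : G.r a ∈ H' := g2 a (by rw [hbs]; rfl)
        have : G.r a ∉ H' := h1 a (by rw [has, List.dropLast_cons₂]; simp)
        exact this hrb
      | cons b' bs' =>
        have key := split_unique H' as bs t₁ t₂ heq' (by rw [has]; simp) (by rw [hbs]; simp)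
          (fun e he => h1 e (by
            rw [has, List.dropLast_cons₂]
            rw [has] at he
            simp only [List.mem_cons]
            right; exact he))
          (fun e he => h2 e (by
            rw [hbs, List.dropLast_cons₂]
            rw [hbs] at he
            simp only [List.mem_cons]
            right; exact he))
          (fun e he => g1 e (by rw [has, List.getLast?_cons_cons, ← has]; exact he))
          (fun e he => g2 e (by rw [hbs, List.getLast?_cons_cons, ← hbs]; exact he))
        rw [has, hbs] at key
        rw [key]
lemma append_gp_mem {X H : Set G.V} (hXH : X ⊆ H)
    (hgood : ∀ w ∈ H, ∃ p, Good G X w p) {α : Walk G} (hα : α ∈ G.FE H) :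
    α.append (gp G X α.rng) ∈ G.FE X := by
  obtain ⟨hp, hnil, hsrc, hdl, hrng⟩ := hα
  have hg := gp_good (hgood _ hrng)
  set p := gp G X α.rng with hpdef
  obtain ⟨hp', hsrc', hrng', hdl', hiff'⟩ := hg
  have hpath : G.IsPath (α.append p) := by
    obtain ⟨v, l⟩ := α
    exact isPath_append l v hp hp' hsrc'
  refine ⟨hpath, by simp [Walk.append, hnil], fun h => hsrc (hXH h), ?_, ?_⟩
  · show ∀ e ∈ (α.edges ++ p.edges).dropLast, G.r e ∉ X
    cases hpe : p.edges with
    | nil =>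
      rw [List.append_nil]
      intro e he
      exact fun hX => hdl e he (hXH hX)
    | cons a t =>
      rw [hpe] at hdl' hiff'
      rw [List.dropLast_append_of_ne_nil (List.cons_ne_nil a t)]
      intro e he
      rcases List.mem_append.mp he with he | he
      · rcases mem_dropLast_or_getLast he with h' | h'
        · exact fun hX => hdl e h' (hXH hX)
        · intro hX
          have hrngX : α.rng ∈ X := by rw [rng_of_getLast h']; exact hX
          exact (List.cons_ne_nil a t) (hiff'.mpr hrngX)
      · exact hdl' e he
  · show Walk.rng (⟨α.src, α.edges ++ p.edges⟩ : Walk G) ∈ X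
    cases hpe : p.edges with
    | nil =>
      rw [List.append_nil]
      show α.rng ∈ X
      exact hiff'.mp hpe
    | cons a t =>
      rw [rng_append_ne (w := p.src) α.edges (List.cons_ne_nil a t), ← hpe]
      exact hrng'

lemma append_gp_injOn {X H : Set G.V} (hgood : ∀ w ∈ H, ∃ p, Good G X w p) :
    Set.InjOn (fun α : Walk G => α.append (gp G X α.rng)) (G.FE H) := by
  intro α hα β hβ heq
  have heq' : α.append (gp G X α.rng) = β.append (gp G X β.rng) := heq
  have hedges := congrArg (fun q : Walk G => q.edges) heq'
  simp only [Walk.append] at hedges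
  have hkey : α.edges = β.edges :=
    split_unique H α.edges β.edges _ _ hedges hα.2.1 hβ.2.1 hα.2.2.2.1 hβ.2.2.2.1
      (fun e he => by rw [← rng_of_getLast he]; exact hα.2.2.2.2)
      (fun e he => by rw [← rng_of_getLast he]; exact hβ.2.2.2.2)
  have hsrc := congrArg (fun q : Walk G => q.src) heq'
  simp only [Walk.append] at hsrc
  obtain ⟨v, l⟩ := α
  obtain ⟨w, m⟩ := β
  simp only at hkey hsrc
  rw [hkey, hsrc]
end Aux

/-- for a cycle without exits `c` with `H` the saturated closure of `c⁰`:
`F_E(c⁰)` is finite iff `H` satisfies Condition (F) and `B_H = ∅`. -/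
theorem FE_finite_iff_conditionF (G : DirGraph) (c : Walk G)
    (hc : G.IsCycle c) (hne : G.NoExits c) :
    (G.FE (G.verts c)).Finite ↔
      (G.ConditionF (G.satClosure (G.verts c)) ∧ G.BH (G.satClosure (G.verts c)) = ∅) := by
  set X := G.verts c with hXdef
  set H := G.satClosure X with hHdef
  have hXeh : EH G X := verts_eh hc hne
  have hH : H = ⋃ n, stage G X n := satClosure_eq_iUnion_stage hXeh
  have hXH : X ⊆ H := subset_satClosure
  have hgood : ∀ w ∈ H, ∃ p, Good G X w p := by
    intro w hw
    rw [hH] at hw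
    obtain ⟨n, hn⟩ := Set.mem_iUnion.mp hw
    exact good_exists n w hn
  constructor
  · intro hFE
    have hdiff : (H \ X).Finite := by
      refine Set.Finite.of_finite_image (f := fun w => gp G X w) (hFE.subset ?_) ?_
      · rintro _ ⟨w, hw, rfl⟩
        exact gp_mem_FE (hgood w hw.1) hw.2
      · intro a ha b hb hab
        have hab' : gp G X a = gp G X b := hab
        have ha' := (gp_good (hgood a ha.1)).2.1
        have hb' := (gp_good (hgood b hb.1)).2.1
        rw [← ha', ← hb', hab']
    have hHfin : H.Finite := (hdiff.union (verts_finite (G := G) (c := c))).subset (by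
      intro v hv
      by_cases h : v ∈ X
      · exact Or.inr h
      · exact Or.inl ⟨hv, h⟩)
    have hB : G.BH H = ∅ := by
      rw [Set.eq_empty_iff_forall_notMem]
      rintro v ⟨hvH, hinf, _, hfin⟩
      have hvX : v ∉ X := fun h => hvH (hXH h)
      have hS : {e | G.s e = v ∧ G.r e ∈ H}.Infinite := by
        intro hSfin
        refine hinf (Set.Finite.subset (hSfin.union hfin) ?_)
        intro e he
        by_cases h : G.r e ∈ H
        · exact Or.inl ⟨he, h⟩
        · exact Or.inr ⟨he, h⟩
      refine hS (Set.Finite.of_finite_image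
        (f := fun e => (⟨v, e :: (gp G X (G.r e)).edges⟩ : Walk G)) (hFE.subset ?_) ?_)
      · rintro _ ⟨e, ⟨hse, hre⟩, rfl⟩
        have h1 := cons_gp_mem_FE (hgood _ hre) (show G.s e ∉ X by rw [hse]; exact hvX)
        rwa [hse] at h1
      · intro a ha b hb hab
        have h2 := congrArg (fun q : Walk G => q.edges) hab
        simp only at h2
        simpa using congrArg List.head? h2
    have hFEH : (G.FE H).Finite := by
      refine Set.Finite.of_finite_image (hFE.subset ?_) (append_gp_injOn hgood)
      rintro _ ⟨α, hα, rfl⟩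
      exact append_gp_mem hXH hgood hα
    refine ⟨⟨hHfin, hFEH.subset fun α hα => hα.1, ?_⟩, hB⟩
    refine Set.Finite.subset Set.finite_empty ?_
    rintro α ⟨_, h2⟩
    rw [hB] at h2
    exact h2
  · rintro ⟨⟨hHfin, hFE'fin, _⟩, hB⟩
    have hFEH : (G.FE H).Finite := hFE'fin.subset (by
      intro α hα
      exact ⟨hα, fun e _ => by rw [hB]; exact Set.notMem_empty _⟩)
    obtain ⟨N, hN⟩ := exists_bound hHfin (fun v n => v ∈ stage G X n)
      (fun v m n hmn h => stage_mono hmn h)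
      (fun v hv => Set.mem_iUnion.mp (hH ▸ hv))
    have hfb : ∀ v ∈ (⋃ n, stage G X n), {e | G.s e = v}.Finite := by
      intro v hv
      obtain ⟨n, hn⟩ := Set.mem_iUnion.mp hv
      exact stage_fb (verts_fb hne) n v hn
    have htriv : {p : Walk G | p.edges = [] ∧ p.src ∈ H}.Finite := by
      refine Set.Finite.subset (hHfin.image (fun v => (⟨v, []⟩ : Walk G))) ?_
      rintro ⟨w, l⟩ ⟨hl, hw⟩
      simp only at hl hw
      subst hl
      exact ⟨w, hw, rfl⟩
    have hbdd : {p : Walk G | G.IsPath p ∧ p.src ∈ H ∧ p.edges.length ≤ N}.Finite := by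
      refine Set.Finite.subset (Set.Finite.biUnion hHfin (fun v hv =>
        paths_finite (iUnion_stage_eh hXeh) hfb N v (by rw [← hH]; exact hv))) ?_
      rintro p ⟨hp, hsv, hlen⟩
      exact Set.mem_biUnion hsv ⟨hp, rfl, hlen⟩
    refine Set.Finite.subset (Set.Finite.image (fun q : Walk G × Walk G => q.1.append q.2)
      (Set.Finite.prod (hFEH.union htriv) hbdd)) ?_
    rintro ⟨v, l⟩ ⟨hp, hnil, hsrcX, hdl, hrng⟩
    have hSources : ∀ e ∈ l, G.s e ∉ X := by
      intro e he
      rcases sources l v hp e he with h | ⟨e'', h'', hr⟩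
      · rw [h]; exact hsrcX
      · rw [← hr]; exact hdl e'' h''
    by_cases hsH : v ∈ H
    · refine ⟨(⟨v, []⟩, ⟨v, l⟩), ⟨Or.inr ⟨rfl, hsH⟩, hp, hsH, ?_⟩, ?_⟩
      · exact len_le N l v (hN v hsH) hp hSources
      · show Walk.append ⟨v, []⟩ ⟨v, l⟩ = (⟨v, l⟩ : Walk G)
        simp [Walk.append]
    · have hwitness : ∃ e ∈ l, G.r e ∈ H := by
        refine ⟨l.getLast hnil, List.getLast_mem hnil, ?_⟩
        rw [← rng_of_getLast (p := (⟨v, l⟩ : Walk G)) (List.getLast?_eq_getLast hnil)]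
        exact hXH hrng
      obtain ⟨l₁, e, l₂, hsplit, heH, hl₁⟩ := split_first H l hwitness
      have hassoc : (l₁ ++ [e]) ++ l₂ = l := by
        rw [List.append_assoc, List.singleton_append]
        exact hsplit.symm
      have hβpath : G.IsPath ⟨v, l₁ ++ [e]⟩ :=
        isPath_prefix (l₁ ++ [e]) (l₂ := l₂) (by rw [hassoc]; exact hp)
      have hγpath : G.IsPath ⟨G.r e, l₂⟩ :=
        isPath_suffix l₁ (e := e) (l₂ := l₂) (by rw [← hsplit]; exact hp)
      have hγlen : l₂.length ≤ N := by
        cases hl₂ : l₂ with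
        | nil => simp
        | cons a t =>
          rw [hl₂] at hγpath hsplit
          have heX : G.r e ∉ X := by
            refine hdl e ?_
            rw [hsplit, List.dropLast_append_of_ne_nil (List.cons_ne_nil e (a :: t)),
              List.dropLast_cons₂]
            exact List.mem_append_right _ List.mem_cons_self
          refine len_le N (a :: t) (G.r e) (hN (G.r e) heH) hγpath ?_
          intro e' he'
          rcases sources (a :: t) (G.r e) hγpath e' he' with h | ⟨e'', h'', hr⟩
          · rw [h]; exact heX
          · rw [← hr]
            refine hdl e'' ?_
            rw [hsplit, List.dropLast_append_of_ne_nil (List.cons_ne_nil e (a :: t)),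
              List.dropLast_cons₂]
            exact List.mem_append_right _ (List.mem_cons_of_mem _ h'')
      refine ⟨(⟨v, l₁ ++ [e]⟩, ⟨G.r e, l₂⟩),
        ⟨Or.inl ⟨hβpath, by simp, hsH, ?_, ?_⟩, hγpath, heH, hγlen⟩, ?_⟩
      · rw [List.dropLast_concat]
        exact hl₁
      · show Walk.rng (⟨v, l₁ ++ [e]⟩ : Walk G) ∈ H
        rw [rng_of_getLast (p := (⟨v, l₁ ++ [e]⟩ : Walk G)) List.getLast?_concat]
        exact heH
      · show Walk.append ⟨v, l₁ ++ [e]⟩ ⟨G.r e, l₂⟩ = (⟨v, l⟩ : Walk G)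
        simp only [Walk.append]
        rw [hassoc]
end

section
/- Let E be a directed graph, c a cycle without exits, and H the saturated closure of c^0. If F_E(c^0) is finite, then H is a finite set of vertices. -/
section Aux

namespace DirGraph

variable {G : DirGraph}

/-- Iterated saturation of a set. -/
inductive SatCl (G : DirGraph) (X : Set G.V) : G.V → Prop
  | base {v} : v ∈ X → SatCl G X v
  | sat {v} : G.Regular v → (∀ e, G.s e = v → SatCl G X (G.r e)) → SatCl G X v

lemma satCl_step {X : Set G.V} (hX : ∀ e, G.s e ∈ X → G.r e ∈ X)
    {v} (hv : G.SatCl X v) : ∀ e, G.s e = v → G.SatCl X (G.r e) := by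
  induction hv with
  | base h => exact fun e he => .base (hX e (by rwa [he]))
  | sat hreg h ih => exact fun e he => h e he

lemma rng_cons_cons (v : G.V) (e a : G.E) (l : List G.E) (w : G.V) :
    Walk.rng ⟨v, e :: a :: l⟩ = Walk.rng ⟨w, a :: l⟩ := by
  unfold Walk.rng
  simp only [List.getLast?_cons_cons]
  cases hgl : (a :: l).getLast? with
  | none => simp [List.getLast?_eq_none_iff] at hgl
  | some x => rfl

lemma rng_cons_of_ne_nil (v w : G.V) (e : G.E) (l : List G.E) (hl : l ≠ []) :
    Walk.rng ⟨v, e :: l⟩ = Walk.rng ⟨w, l⟩ := by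
  cases l with
  | nil => exact absurd rfl hl
  | cons a l' => exact rng_cons_cons v e a l' w

lemma hereditary_of_step {S : Set G.V} (h : ∀ e, G.s e ∈ S → G.r e ∈ S) :
    G.Hereditary S := by
  have key : ∀ (l : List G.E) (v : G.V), (∀ e, l.head? = some e → G.s e = v) →
      l.Chain' (fun a b => G.r a = G.s b) → v ∈ S → Walk.rng ⟨v, l⟩ ∈ S := by
    intro l
    induction l with
    | nil => intro v _ _ hv; exact hv
    | cons e l ih =>
      intro v hhead hchain hv
      have hse : G.s e = v := hhead e rfl
      have hre : G.r e ∈ S := h e (by rwa [hse])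
      rw [List.Chain', List.isChain_cons] at hchain
      cases l with
      | nil => exact hre
      | cons a l' =>
        rw [rng_cons_cons v e a l' (G.r e)]
        exact ih (G.r e) (fun e' he' => (hchain.1 e' (by simpa using he')).symm)
          hchain.2 hre
  intro p hp hsrc
  exact key p.edges p.src hp.1 hp.2 hsrc

lemma chain'_mem_next (l : List G.E)
    (hchain : l.Chain' (fun a b => G.r a = G.s b)) :
    ∀ e ∈ l, (∃ e2 ∈ l, G.r e = G.s e2) ∨ l.getLast? = some e := by
  induction l with
  | nil => intro e he; simp at he
  | cons a l ih =>
    rw [List.Chain', List.isChain_cons] at hchain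
    intro e he
    rcases List.mem_cons.mp he with rfl | hel
    · cases hl : l with
      | nil => right; subst hl; rfl
      | cons b l' =>
        left
        refine ⟨b, by simp [hl], ?_⟩
        apply hchain.1
        simp [hl]
    · rcases ih hchain.2 e hel with ⟨e2, he2, hr⟩ | hlast
      · exact Or.inl ⟨e2, List.mem_cons_of_mem _ he2, hr⟩
      · right
        have hlne : l ≠ [] := by rintro rfl; simp at hel
        cases l with
        | nil => exact absurd rfl hlne
        | cons b l' => rw [List.getLast?_cons_cons]; exact hlast

lemma verts_step {c : Walk G} (hc : G.IsCycle c) (hne : G.NoExits c) :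
    ∀ e, G.s e ∈ G.verts c → G.r e ∈ G.verts c := by
  rintro e' ⟨e, hel, hse⟩
  have he' : e' = e := hne e hel e' hse.symm
  subst he'
  rcases chain'_mem_next c.edges hc.1.2 e' hel with ⟨e2, he2, hr⟩ | hlast
  · exact ⟨e2, he2, hr.symm⟩
  · -- e' is the last edge: r e' = c.rng = c.src ∈ verts c
    have hrng : c.rng = G.r e' := by unfold Walk.rng; rw [hlast]
    obtain ⟨e0, he0⟩ : ∃ e0, c.edges.head? = some e0 := by
      cases h : c.edges with
      | nil => exact absurd h hc.2.1
      | cons a l => exact ⟨a, rfl⟩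
    refine ⟨e0, List.mem_of_mem_head? he0, ?_⟩
    rw [hc.1.1 e0 he0, ← hc.2.2.1, hrng]

end DirGraph

end Aux

/-- for a cycle without exits `c`, if `F_E(c⁰)` is finite then the
saturated closure of `c⁰` is finite. -/
theorem satClosure_finite_of_FE_finite (G : DirGraph) (c : Walk G)
    (hc : G.IsCycle c) (hne : G.NoExits c)
    (hfin : (G.FE (G.verts c)).Finite) :
    (G.satClosure (G.verts c)).Finite := by
  set X := G.verts c with hX
  have hstep : ∀ e, G.s e ∈ X → G.r e ∈ X := G.verts_step hc hne
  set T : Set G.V := X ∪ (Walk.src '' (G.FE X)) with hT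
  have hTfin : T.Finite := by
    apply Set.Finite.union
    · have : X ⊆ G.s '' {e | e ∈ c.edges} := by
        rintro v ⟨e, hel, hse⟩; exact ⟨e, hel, hse⟩
      exact Set.Finite.subset (Set.Finite.image _ (c.edges.finite_toSet)) this
    · exact hfin.image _
  refine Set.Finite.subset hTfin ?_
  have h1 : G.satClosure X ⊆ {v | G.SatCl X v} := by
    apply Set.sInter_subset_of_mem
    refine ⟨fun v hv => .base hv, ?_, fun v hreg h => .sat hreg h⟩
    exact DirGraph.hereditary_of_step (fun e he => DirGraph.satCl_step hstep he e rfl)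
  refine h1.trans ?_
  intro v hv
  induction hv with
  | base h => exact Or.inl h
  | @sat v hreg hall ih =>
    by_cases hvX : v ∈ X
    · exact Or.inl hvX
    obtain ⟨e, he⟩ := hreg.2
    rcases ih e he with hre | ⟨α, hα, hαsrc⟩
    · refine Or.inr ⟨⟨v, [e]⟩, ?_, rfl⟩
      refine ⟨⟨?_, ?_⟩, by simp, hvX, ?_, ?_⟩
      · intro e2 he2
        rw [List.head?_cons, Option.some_inj] at he2
        subst he2; exact he
      · exact List.isChain_singleton _
      · intro e2 he2; simp at he2
      · exact hre
    · obtain ⟨⟨hαhead, hαchain⟩, hαne, hαsrcX, hαdrop, hαrng⟩ := hα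
      refine Or.inr ⟨⟨v, e :: α.edges⟩, ?_, rfl⟩
      refine ⟨⟨?_, ?_⟩, by simp, hvX, ?_, ?_⟩
      · intro e2 he2
        rw [List.head?_cons, Option.some_inj] at he2
        subst he2; exact he
      · rw [List.Chain', List.isChain_cons]
        refine ⟨?_, hαchain⟩
        intro y hy
        have hy' : α.edges.head? = some y := by simpa using hy
        rw [hαhead y hy', ← hαsrc]
      · rw [List.dropLast_cons_of_ne_nil hαne]
        intro e2 he2
        rcases List.mem_cons.mp he2 with h | h
        · rw [h, ← hαsrc]; exact hαsrcX
        · exact hαdrop e2 h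
      · rw [DirGraph.rng_cons_of_ne_nil v α.src e α.edges hαne]
        exact hαrng
end

section
/- Let E be a directed graph and U a compact open invariant subset of the unit space of the graph groupoid G_E. Then U is the disjoint union of the (finitely many) minimal compact open invariant subsets contained in U. -/
namespace DirGraph
variable (G : DirGraph)

/-- A generalized path: either a finite walk or an infinite edge sequence. -/
def BP : Type := Walk G ⊕ (ℕ → G.E)

/-- Source of a generalized path. -/
def bsrc : G.BP → G.V
  | .inl α => α.src
  | .inr x => G.s (x 0)

/-- A sink: a vertex emitting no edges. -/
def IsSink (v : G.V) : Prop := ∀ e, G.s e ≠ v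

/-- An infinite emitter. -/
def InfEmitter (v : G.V) : Prop := {e | G.s e = v}.Infinite

/-- A boundary path: an infinite path, or a finite path ending at a sink or an
infinite emitter. -/
def IsBoundary : G.BP → Prop
  | .inl α => G.IsPath α ∧ (G.IsSink α.rng ∨ G.InfEmitter α.rng)
  | .inr x => G.IsInfPath x

/-- The boundary path space `X` of the graph. -/
def XB : Type := {p : G.BP // G.IsBoundary p}

/-- The set of generalized paths extending a finite walk `μ`. -/
def extends' (μ : Walk G) : Set G.BP :=
  {p | G.bsrc p = μ.src ∧ (match p with
    | .inl α => μ.edges <+: α.edges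
    | .inr x => List.ofFn (fun i : Fin μ.edges.length => x i) = μ.edges)}

/-- The cylinder set `Z(μ)` in the boundary path space. -/
def Zset (μ : Walk G) : Set G.XB := {x | x.1 ∈ G.extends' μ}

/-- The basic set `Z(μ ∖ F)`. -/
def Zminus (μ : Walk G) (F : Set G.E) : Set G.XB :=
  G.Zset μ \ ⋃ e ∈ F, G.Zset ⟨μ.src, μ.edges ++ [e]⟩

/-- The cylinder-set topology on the boundary path space. -/
instance XBtop : TopologicalSpace G.XB :=
  TopologicalSpace.generateFrom
    {S | ∃ (μ : Walk G) (F : Set G.E), G.IsPath μ ∧ F.Finite ∧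
          (∀ e ∈ F, G.s e = μ.rng) ∧ S = G.Zminus μ F}

/-- `e` is an edge occurring in a generalized path. -/
def edgeOf (e : G.E) : G.BP → Prop
  | .inl α => e ∈ α.edges
  | .inr x => ∃ i, x i = e

/-- `U_H`: boundary paths visiting `H` (with `r(x₀) := s(x)`). -/
def UH (H : Set G.V) : Set G.XB :=
  {x | G.bsrc x.1 ∈ H ∨ ∃ e, G.edgeOf e x.1 ∧ G.r e ∈ H}

/-- `U_S`: finite boundary paths with range in `S`. -/
def US (S : Set G.V) : Set G.XB :=
  {x | ∃ α : Walk G, x.1 = Sum.inl α ∧ α.rng ∈ S}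

/-- `U_{H,S} = U_H ⊔ U_S`. -/
def UHS (H S : Set G.V) : Set G.XB := G.UH H ∪ G.US S

/-- `F_α`: the edges emitted by `r(α)` with range outside `H`. -/
def Falpha (H : Set G.V) (α : Walk G) : Set G.E :=
  {e | G.s e = α.rng ∧ G.r e ∉ H}

/-- Concatenation of a finite walk with a generalized path. -/
def concatBP (μ : Walk G) : G.BP → G.BP
  | .inl α => .inl ⟨μ.src, μ.edges ++ α.edges⟩
  | .inr x => .inr (G.concatSeq μ x)

/-- Tail equivalence on the boundary path space: the equivalence induced by the graph
groupoid `G_E` on its unit space `X`. -/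
def TailEquiv (x y : G.XB) : Prop :=
  ∃ (μ ν : Walk G) (t : G.BP), G.IsPath μ ∧ G.IsPath ν ∧
    μ.rng = G.bsrc t ∧ ν.rng = G.bsrc t ∧
    x.1 = G.concatBP μ t ∧ y.1 = G.concatBP ν t

/-- Invariance of a subset of the unit space of the graph groupoid. -/
def InvariantX (U : Set G.XB) : Prop :=
  ∀ x y, G.TailEquiv x y → x ∈ U → y ∈ U

/-- Compact open invariant subsets of the unit space of the graph groupoid. -/
def COI (U : Set G.XB) : Prop := IsCompact U ∧ IsOpen U ∧ G.InvariantX U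

/-- Minimal compact open invariant subsets. -/
def MinCOI (U : Set G.XB) : Prop :=
  G.COI U ∧ U.Nonempty ∧ ∀ W, G.COI W → W ⊆ U → W = ∅ ∨ W = U

end DirGraph
namespace DirGraph
variable {G : DirGraph}

/-- Edge at index `n` of a generalized path. -/
def eA : G.BP → ℕ → Option G.E
  | .inl α, n => α.edges[n]?
  | .inr ξ, n => some (ξ n)

@[simp] lemma eA_inl (α : Walk G) (n : ℕ) : eA (.inl α) n = α.edges[n]? := rfl
@[simp] lemma eA_inr (ξ : ℕ → G.E) (n : ℕ) : eA (.inr ξ) n = some (ξ n) := rfl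

/-- The prefix walk of a generalized path. -/
def prefW : G.BP → ℕ → Walk G
  | .inl α, n => ⟨α.src, α.edges.take n⟩
  | .inr ξ, n => ⟨G.s (ξ 0), List.ofFn (fun i : Fin n => ξ i)⟩

@[simp] lemma prefW_src (x : G.BP) (n : ℕ) : (prefW x n).src = G.bsrc x := by
  cases x <;> rfl

lemma prefW_edges_getElem? (x : G.BP) (n i : ℕ) :
    (prefW x n).edges[i]? = if i < n then eA x i else none := by
  cases x with
  | inl α => simp [prefW, List.getElem?_take]
  | inr ξ => simp [prefW, List.getElem?_ofFn, List.ofFnNthVal]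

lemma isPath_iff {p : Walk G} :
    G.IsPath p ↔ (∀ e, p.edges[0]? = some e → G.s e = p.src) ∧
      (∀ i e f, p.edges[i]? = some e → p.edges[i + 1]? = some f → G.r e = G.s f) := by
  unfold IsPath
  rw [List.head?_eq_getElem?]
  refine and_congr Iff.rfl ?_
  show List.IsChain _ p.edges ↔ _
  rw [List.isChain_iff_getElem]
  constructor
  · rintro h i e f he hf
    obtain ⟨hf', hfe⟩ := List.getElem?_eq_some_iff.1 hf
    obtain ⟨he', hee⟩ := List.getElem?_eq_some_iff.1 he
    have := h i (by omega)
    rwa [hee, hfe] at this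
  · intro h i hi
    have hi1 : i + 1 < p.edges.length := by omega
    have he : p.edges[i]? = some p.edges[i] := List.getElem?_eq_some_iff.2 ⟨by omega, rfl⟩
    have hf : p.edges[i + 1]? = some p.edges[i + 1] := List.getElem?_eq_some_iff.2 ⟨hi1, rfl⟩
    simpa using h i _ _ he hf

lemma memZ_iff {μ : Walk G} {y : G.BP} :
    y ∈ G.extends' μ ↔ G.bsrc y = μ.src ∧
      ∀ i e, μ.edges[i]? = some e → eA y i = some e := by
  cases y with
  | inl β =>
    show β.src = μ.src ∧ μ.edges <+: β.edges ↔ _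
    refine and_congr Iff.rfl ?_
    constructor
    · rintro ⟨t, ht⟩ i e he
      have hi : i < μ.edges.length := (List.getElem?_eq_some_iff.1 he).1
      simp [← ht, List.getElem?_append_left hi, he]
    · intro h
      rw [List.prefix_iff_eq_take]
      apply List.ext_getElem?
      intro n
      rw [List.getElem?_take]
      split
      · rcases hn : μ.edges[n]? with _ | e
        · exact absurd hn (by simp; omega)
        · exact (h n e hn).symm
      · exact List.getElem?_eq_none (by omega)
  | inr ξ =>
    show G.s (ξ 0) = μ.src ∧ List.ofFn _ = μ.edges ↔ _
    refine and_congr Iff.rfl ?_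
    constructor
    · intro h i e he
      have hi : i < μ.edges.length := (List.getElem?_eq_some_iff.1 he).1
      have := congrArg (fun l => l[i]?) h
      have he' := List.getElem?_eq_some_iff.1 he
      simpa [List.getElem?_ofFn, hi, he'.2] using this
    · intro h
      apply List.ext_getElem?
      intro n
      rw [List.getElem?_ofFn]
      split
      · rcases hn : μ.edges[n]? with _ | e
        · exact absurd hn (by simp; omega)
        · simpa using (h n e hn)
      · exact (List.getElem?_eq_none (by omega)).symm

lemma mem_Zset_iff {μ : Walk G} {y : G.XB} :
    y ∈ G.Zset μ ↔ G.bsrc y.1 = μ.src ∧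
      ∀ i e, μ.edges[i]? = some e → eA y.1 i = some e := memZ_iff

end DirGraph
namespace DirGraph
variable {G : DirGraph}


lemma getElem?_isSome_iff {X : Type _} {l : List X} {n : ℕ} :
    (l[n]?).isSome ↔ n < l.length := by
  rw [Option.isSome_iff_exists]
  constructor
  · rintro ⟨a, ha⟩; exact (List.getElem?_eq_some_iff.1 ha).1
  · intro h; exact ⟨l[n], List.getElem?_eq_some_iff.2 ⟨h, rfl⟩⟩

lemma rng_of_nil {p : Walk G} (h : p.edges = []) : p.rng = p.src := by
  unfold Walk.rng; rw [h]; rfl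

@[simp] lemma rng_nil (v : G.V) : Walk.rng (⟨v, []⟩ : Walk G) = v := rfl

lemma rng_of_getElem? {p : Walk G} {e : G.E}
    (h : p.edges[p.edges.length - 1]? = some e) : p.rng = G.r e := by
  unfold Walk.rng
  rw [List.getLast?_eq_getElem?, h]

lemma rng_concat (v : G.V) (l : List G.E) (e : G.E) :
    Walk.rng (⟨v, l ++ [e]⟩ : Walk G) = G.r e := by
  unfold Walk.rng
  rw [List.getLast?_concat]

lemma isPath_nil (v : G.V) : G.IsPath ⟨v, []⟩ := by
  rw [isPath_iff]; constructor <;> intros <;> simp_all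

/-- Chain facts about a boundary path, in terms of `eA`. -/
lemma eA_head {x : G.BP} (hx : G.IsBoundary x) {e : G.E} (h : eA x 0 = some e) :
    G.s e = G.bsrc x := by
  cases x with
  | inl α => exact ((isPath_iff.1 hx.1).1 e h)
  | inr ξ => cases h; rfl

lemma eA_chain {x : G.BP} (hx : G.IsBoundary x) {i : ℕ} {e f : G.E}
    (he : eA x i = some e) (hf : eA x (i + 1) = some f) : G.r e = G.s f := by
  cases x with
  | inl α => exact (isPath_iff.1 hx.1).2 i e f he hf
  | inr ξ => cases he; cases hf; exact hx i

lemma eA_some_mono {x : G.BP} {n : ℕ} (h : (eA x n).isSome) {i : ℕ} (hi : i ≤ n) :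
    (eA x i).isSome := by
  cases x with
  | inl α =>
    simp only [eA_inl, getElem?_isSome_iff] at h ⊢
    omega
  | inr ξ => simp

lemma isPath_prefW {x : G.BP} (hx : G.IsBoundary x) (n : ℕ) :
    G.IsPath (prefW x n) := by
  rw [isPath_iff]
  constructor
  · intro e he
    rw [prefW_edges_getElem? x n 0] at he
    by_cases h0 : 0 < n
    · simp only [h0, if_true] at he
      rw [prefW_src]
      exact eA_head hx he
    · simp [h0] at he
  · intro i e f he hf
    rw [prefW_edges_getElem?] at he hf
    by_cases h1 : i + 1 < n
    · simp only [h1, if_true, show i < n by omega] at he hf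
      exact eA_chain hx he hf
    · simp only [h1, if_false] at hf
      cases hf

lemma prefW_length_of_isSome {x : G.BP} {n : ℕ} (h : ∀ i < n, (eA x i).isSome) :
    (prefW x n).edges.length = n := by
  cases x with
  | inl α =>
    show (α.edges.take n).length = n
    rw [List.length_take]
    by_cases hn : n ≤ α.edges.length
    · omega
    · exfalso
      have := h α.edges.length (by omega)
      rw [eA_inl, getElem?_isSome_iff] at this
      omega
  | inr ξ => simp [prefW]

lemma prefW_length_le {x : G.BP} {n : ℕ} : (prefW x n).edges.length ≤ n := by
  cases x with
  | inl α => simp [prefW]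
  | inr ξ => simp [prefW]

/-- V1: source of the `n`-th edge equals the range of the `n`-prefix. -/
lemma s_eA_eq_rng_prefW {x : G.BP} (hx : G.IsBoundary x) {n : ℕ} {e : G.E}
    (h : eA x n = some e) : G.s e = (prefW x n).rng := by
  have hlen : (prefW x n).edges.length = n :=
    prefW_length_of_isSome (fun i hi =>
      eA_some_mono (x := x) (n := n) (by rw [h]; rfl) (by omega))
  cases n with
  | zero =>
    rw [rng_of_nil (List.length_eq_zero_iff.1 hlen), prefW_src]
    exact eA_head hx h
  | succ m =>
    obtain ⟨e', he'⟩ : ∃ e', eA x m = some e' := by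
      have := eA_some_mono (x := x) (n := m + 1) (by rw [h]; rfl) (show m ≤ m + 1 by omega)
      exact Option.isSome_iff_exists.1 this
    have : (prefW x (m + 1)).edges[(prefW x (m+1)).edges.length - 1]? = some e' := by
      rw [hlen, prefW_edges_getElem?]
      simp [he', show m < m + 1 by omega]
    rw [rng_of_getElem? this]
    exact (eA_chain hx he' h).symm

/-- PS: prefix snoc. -/
lemma prefW_succ {x : G.BP} {n : ℕ} {e : G.E} (h : eA x n = some e) :
    prefW x (n + 1) = ⟨G.bsrc x, (prefW x n).edges ++ [e]⟩ := by
  cases x with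
  | inl α =>
    show Walk.mk α.src (α.edges.take (n+1)) = Walk.mk α.src (α.edges.take n ++ [e])
    rw [List.take_succ]
    simp only [eA_inl] at h
    rw [h]
    rfl
  | inr ξ =>
    simp only [eA_inr, Option.some_inj] at h
    subst h
    simp only [prefW, bsrc]
    congr 1
    apply List.ext_getElem?
    intro i
    simp only [List.getElem?_ofFn, List.ofFnNthVal]
    rcases lt_trichotomy i n with hi | hi | hi
    · rw [List.getElem?_append_left (by simp [hi]), List.getElem?_ofFn]
      simp [List.ofFnNthVal, hi, show i < n + 1 by omega]
    · subst hi
      have : i < i + 1 := by omega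
      simp only [this, dif_pos]
      rw [List.getElem?_append_right (by simp), List.length_ofFn]
      simp
    · have h1 : ¬ i < n + 1 := by omega
      simp only [h1, dif_neg]
      rw [List.getElem?_append_right (by simp; omega), List.length_ofFn]
      rw [List.getElem?_eq_none (by simp; omega)]
      simp

end DirGraph
namespace DirGraph
variable {G : DirGraph}

/-- Appending two compatible paths gives a path. -/
lemma isPath_append {p q : Walk G} (hp : G.IsPath p) (hq : G.IsPath q)
    (h : p.rng = q.src) : G.IsPath ⟨p.src, p.edges ++ q.edges⟩ := by
  rw [isPath_iff] at hp hq ⊢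
  constructor
  · intro e he
    rcases hpe : p.edges with _ | ⟨a, l⟩
    · rw [hpe] at he
      simp only [List.nil_append] at he
      have := hq.1 e he
      rw [this, ← h, rng_of_nil hpe]
    · rw [List.getElem?_append_left (by rw [hpe]; simp)] at he
      exact hp.1 e he
  · intro i e f he hf
    rcases lt_trichotomy (i + 1) p.edges.length with h1 | h1 | h1
    · rw [List.getElem?_append_left (by omega)] at he hf
      exact hp.2 i e f he hf
    · rw [List.getElem?_append_left (by omega)] at he
      rw [List.getElem?_append_right (by omega), h1, Nat.sub_self] at hf
      have hrng : p.rng = G.r e := rng_of_getElem? (by rw [show p.edges.length - 1 = i by omega]; exact he)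
      have := hq.1 f hf
      rw [this, ← h, hrng]
    · rw [List.getElem?_append_right (by omega)] at he hf
      have : i + 1 - p.edges.length = (i - p.edges.length) + 1 := by omega
      rw [this] at hf
      exact hq.2 _ e f he hf

lemma rng_append {p q : Walk G} (h : p.rng = q.src) :
    Walk.rng ⟨p.src, p.edges ++ q.edges⟩ = q.rng := by
  rcases hqe : q.edges with _ | ⟨a, l⟩
  · rw [List.append_nil, rng_of_nil hqe]
    exact h
  · have hne : q.edges.getLast?.isSome := by rw [hqe]; simp
    obtain ⟨d, hd⟩ := Option.isSome_iff_exists.1 hne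
    rw [← hqe]
    have h1 : (p.edges ++ q.edges).getLast? = some d := by
      rw [List.getLast?_append, hd]; rfl
    rw [show Walk.rng ⟨p.src, p.edges ++ q.edges⟩ = G.r d by unfold Walk.rng; rw [h1]]
    unfold Walk.rng
    rw [hd]

lemma isPath_snoc {p : Walk G} (hp : G.IsPath p) {e : G.E} (he : G.s e = p.rng) :
    G.IsPath ⟨p.src, p.edges ++ [e]⟩ := by
  have hq : G.IsPath ⟨G.s e, [e]⟩ := by
    rw [isPath_iff]
    constructor
    · intro f hf; simp at hf; subst hf; rfl
    · intro i a b ha hb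
      rcases i with _ | i <;> simp at ha hb
  exact isPath_append hp hq he.symm

/-- The tail of a generalized path. -/
def tlB : G.BP → ℕ → G.BP
  | .inl α, n => .inl ⟨(prefW (Sum.inl α) n).rng, α.edges.drop n⟩
  | .inr ξ, n => .inr fun i => ξ (n + i)

lemma bsrc_tlB {x : G.BP} (hx : G.IsBoundary x) (n : ℕ) :
    G.bsrc (tlB x n) = (prefW x n).rng := by
  cases x with
  | inl α => rfl
  | inr ξ =>
    cases n with
    | zero =>
      show G.s (ξ 0) = Walk.rng _
      rw [rng_of_nil (by simp [prefW])]
      rfl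
    | succ m =>
      show G.s (ξ (m + 1 + 0)) = _
      have : eA (Sum.inr ξ : G.BP) (m + 1) = some (ξ (m + 1)) := rfl
      rw [← s_eA_eq_rng_prefW hx this]

/-- The tail of a boundary path is a boundary path. -/
lemma isBoundary_tlB {x : G.BP} (hx : G.IsBoundary x) (n : ℕ) :
    G.IsBoundary (tlB x n) := by
  cases x with
  | inr ξ =>
    intro i
    show G.r (ξ (n + i)) = G.s (ξ (n + (i + 1)))
    rw [show n + (i + 1) = (n + i) + 1 by omega]
    exact hx (n + i)
  | inl α =>
    have hrng : Walk.rng (⟨(prefW (Sum.inl α) n).rng, α.edges.drop n⟩ : Walk G) = α.rng := by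
      rcases hd : α.edges.drop n with _ | ⟨a, l⟩
      · have hn : α.edges.length ≤ n := by
          by_contra hc
          have := congrArg List.length hd
          simp at this; omega
        show Walk.rng ⟨α.src, α.edges.take n⟩ = α.rng
        rw [List.take_of_length_le hn]
      · have hne : (α.edges.drop n).getLast?.isSome := by rw [hd]; simp
        obtain ⟨d, hdd⟩ := Option.isSome_iff_exists.1 hne
        have h1 : α.edges.getLast? = some d := by
          conv_lhs => rw [(List.take_append_drop n α.edges).symm]
          rw [List.getLast?_append, hdd]
          rfl
        rw [hd] at hdd
        show Walk.rng ⟨(prefW (Sum.inl α) n).rng, a :: l⟩ = α.rng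
        unfold Walk.rng
        rw [h1, hdd]
    constructor
    · rw [isPath_iff]
      constructor
      · intro e he
        show G.s e = (prefW (Sum.inl α) n).rng
        rw [List.getElem?_drop] at he
        exact s_eA_eq_rng_prefW hx (by simpa using he)
      · intro i e f he hf
        rw [List.getElem?_drop] at he hf
        rw [show n + (i + 1) = (n + i) + 1 by omega] at hf
        exact eA_chain hx (x := Sum.inl α) (i := n + i) (by simpa using he) (by simpa using hf)
    · rw [hrng]; exact hx.2

/-- Tail as an element of the boundary path space. -/
def tlX (x : G.XB) (n : ℕ) : G.XB := ⟨tlB x.1 n, isBoundary_tlB x.2 n⟩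

lemma tailEquiv_symm {x y : G.XB} (h : G.TailEquiv x y) : G.TailEquiv y x := by
  obtain ⟨μ, ν, t, h1, h2, h3, h4, h5, h6⟩ := h
  exact ⟨ν, μ, t, h2, h1, h4, h3, h6, h5⟩

lemma tailEquiv_tl (x : G.XB) (n : ℕ) : G.TailEquiv x (tlX x n) := by
  refine ⟨prefW x.1 n, ⟨(prefW x.1 n).rng, []⟩, tlB x.1 n,
    isPath_prefW x.2 n, isPath_nil _, (bsrc_tlB x.2 n).symm, by
      rw [rng_nil]; exact (bsrc_tlB x.2 n).symm, ?_, ?_⟩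
  · rcases hx : x.1 with α | ξ
    · show Sum.inl α = Sum.inl ⟨(prefW (Sum.inl α : G.BP) n).src,
        (prefW (Sum.inl α : G.BP) n).edges ++ α.edges.drop n⟩
      congr 1
      show α = Walk.mk α.src (α.edges.take n ++ α.edges.drop n)
      rw [List.take_append_drop]
    · show Sum.inr ξ = Sum.inr (G.concatSeq (prefW (Sum.inr ξ : G.BP) n) fun i => ξ (n + i))
      congr 1
      funext i
      unfold concatSeq
      have hlen : (prefW (Sum.inr ξ : G.BP) n).edges.length = n := by simp [prefW]
      split
      · rename_i hi
        rw [hlen] at hi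
        show ξ i = (List.ofFn fun j : Fin n => ξ j).get _
        exact (List.get_ofFn (fun j : Fin n => ξ j) ⟨i, by simpa using hi⟩).symm
      · rename_i hi
        rw [hlen] at hi
        show ξ i = ξ (n + (i - (prefW (Sum.inr ξ : G.BP) n).edges.length))
        rw [hlen]
        congr 1
        omega
  · show tlB x.1 n = G.concatBP ⟨(prefW x.1 n).rng, []⟩ (tlB x.1 n)
    rcases hx : x.1 with α | ξ
    · show (Sum.inl ⟨(prefW (Sum.inl α : G.BP) n).rng, α.edges.drop n⟩ : G.BP) =
        Sum.inl ⟨(prefW (Sum.inl α : G.BP) n).rng, [] ++ α.edges.drop n⟩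
      rw [List.nil_append]
    · show (Sum.inr (fun i => ξ (n + i)) : G.BP) =
        Sum.inr (G.concatSeq ⟨(prefW (Sum.inr ξ : G.BP) n).rng, []⟩ fun i => ξ (n + i))
      congr 1

end DirGraph
namespace DirGraph
variable {G : DirGraph}

lemma isBoundary_concatBP {ν : Walk G} {z : G.BP} (hν : G.IsPath ν)
    (hz : G.IsBoundary z) (hr : ν.rng = G.bsrc z) : G.IsBoundary (G.concatBP ν z) := by
  cases z with
  | inl β =>
    refine ⟨isPath_append hν hz.1 hr, ?_⟩
    rw [show Walk.rng ⟨ν.src, ν.edges ++ β.edges⟩ = β.rng from rng_append hr]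
    exact hz.2
  | inr ξ =>
    intro i
    show G.r (G.concatSeq ν ξ i) = G.s (G.concatSeq ν ξ (i + 1))
    unfold concatSeq
    rcases lt_trichotomy (i + 1) ν.edges.length with h1 | h1 | h1
    · rw [dif_pos (show i < ν.edges.length by omega), dif_pos h1]
      refine (isPath_iff.1 hν).2 i _ _ ?_ ?_ <;>
        exact List.getElem?_eq_some_iff.2 ⟨by omega, rfl⟩
    · rw [dif_pos (show i < ν.edges.length by omega), dif_neg (by omega)]
      have : ν.rng = G.r (ν.edges.get ⟨i, by omega⟩) := by
        apply rng_of_getElem?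
        exact List.getElem?_eq_some_iff.2 ⟨by omega, by simp [← h1]⟩
      rw [← this, hr, show i + 1 - ν.edges.length = 0 by omega]
      exact (eA_head hz rfl).symm
    · rw [dif_neg (by omega), dif_neg (by omega)]
      rw [show i + 1 - ν.edges.length = (i - ν.edges.length) + 1 by omega]
      exact hz (i - ν.edges.length)

lemma bsrc_concatBP {ν : Walk G} {z : G.BP} (hν : G.IsPath ν) (hr : ν.rng = G.bsrc z) :
    G.bsrc (G.concatBP ν z) = ν.src := by
  cases z with
  | inl β => rfl
  | inr ξ =>
    show G.s (G.concatSeq ν ξ 0) = ν.src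
    unfold concatSeq
    by_cases h0 : 0 < ν.edges.length
    · rw [dif_pos h0]
      exact (isPath_iff.1 hν).1 _ (List.getElem?_eq_some_iff.2 ⟨h0, rfl⟩)
    · rw [dif_neg h0]
      have he : ν.edges = [] := List.length_eq_zero_iff.1 (by omega)
      rw [Nat.zero_sub]
      show G.s (ξ 0) = ν.src
      have : G.bsrc (Sum.inr ξ : G.BP) = G.s (ξ 0) := rfl
      rw [← this, ← hr, rng_of_nil he]

lemma eA_concatBP (ν : Walk G) (z : G.BP) (i : ℕ) :
    eA (G.concatBP ν z) i =
      if i < ν.edges.length then ν.edges[i]? else eA z (i - ν.edges.length) := by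
  cases z with
  | inl β =>
    show (ν.edges ++ β.edges)[i]? = _
    split
    · rename_i h
      exact List.getElem?_append_left h
    · rename_i h
      rw [List.getElem?_append_right (by omega)]
      rfl
  | inr ξ =>
    show some (G.concatSeq ν ξ i) = _
    unfold concatSeq
    split
    · rename_i h
      exact (List.getElem?_eq_some_iff.2 ⟨h, by simp⟩).symm
    · rename_i h
      rfl

/-- Grafting a finite path onto a boundary path. -/
def graftX (ν : Walk G) (z : G.XB) (hν : G.IsPath ν) (hr : ν.rng = G.bsrc z.1) : G.XB :=
  ⟨G.concatBP ν z.1, isBoundary_concatBP hν z.2 hr⟩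

lemma tailEquiv_graft (ν : Walk G) (z : G.XB) (hν : G.IsPath ν) (hr : ν.rng = G.bsrc z.1) :
    G.TailEquiv z (graftX ν z hν hr) := by
  refine ⟨⟨G.bsrc z.1, []⟩, ν, z.1, isPath_nil _, hν, rng_nil _, hr, ?_, rfl⟩
  rcases hz : z.1 with β | ξ
  · show Sum.inl β = Sum.inl ⟨G.bsrc (Sum.inl β : G.BP), [] ++ β.edges⟩
    rw [List.nil_append]
    rfl
  · show Sum.inr ξ = Sum.inr (G.concatSeq ⟨G.bsrc (Sum.inr ξ : G.BP), []⟩ ξ)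
    congr 1

/-- Membership in a vertex cylinder. -/
lemma mem_Zv {v : G.V} {y : G.XB} : y ∈ G.Zset ⟨v, []⟩ ↔ G.bsrc y.1 = v := by
  rw [mem_Zset_iff]
  simp

lemma isOpen_Zminus {μ : Walk G} {F : Set G.E} (hμ : G.IsPath μ) (hF : F.Finite)
    (hsF : ∀ e ∈ F, G.s e = μ.rng) : IsOpen (G.Zminus μ F) :=
  TopologicalSpace.GenerateOpen.basic _ ⟨μ, F, hμ, hF, hsF, rfl⟩

lemma isOpen_Zset {μ : Walk G} (hμ : G.IsPath μ) : IsOpen (G.Zset μ) := by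
  have : G.Zset μ = G.Zminus μ ∅ := by
    unfold Zminus
    simp
  rw [this]
  exact isOpen_Zminus hμ Set.finite_empty (by simp)

lemma isOpen_Zv (v : G.V) : IsOpen (G.Zset ⟨v, []⟩) := isOpen_Zset (isPath_nil v)

end DirGraph
namespace DirGraph
variable {G : DirGraph}

lemma mem_Zset_snoc {μ : Walk G} {e : G.E} {y : G.XB} :
    y ∈ G.Zset ⟨μ.src, μ.edges ++ [e]⟩ ↔
      y ∈ G.Zset μ ∧ eA y.1 μ.edges.length = some e := by
  rw [mem_Zset_iff, mem_Zset_iff]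
  constructor
  · rintro ⟨h1, h2⟩
    refine ⟨⟨h1, fun i f hf => ?_⟩, ?_⟩
    · apply h2
      rw [List.getElem?_append_left (List.getElem?_eq_some_iff.1 hf).1]
      exact hf
    · apply h2
      exact List.getElem?_concat_length
  · rintro ⟨⟨h1, h2⟩, h3⟩
    refine ⟨h1, fun i f hf => ?_⟩
    rcases lt_trichotomy i μ.edges.length with hi | hi | hi
    · apply h2
      rwa [List.getElem?_append_left hi] at hf
    · subst hi
      rw [List.getElem?_concat_length] at hf
      cases hf
      exact h3
    · rw [List.getElem?_eq_none (by simp; omega)] at hf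
      cases hf

lemma mem_Zminus_iff {μ : Walk G} {F : Set G.E} {y : G.XB} :
    y ∈ G.Zminus μ F ↔ y ∈ G.Zset μ ∧ ∀ e ∈ F, eA y.1 μ.edges.length ≠ some e := by
  unfold Zminus
  rw [Set.mem_diff]
  constructor
  · rintro ⟨h1, h2⟩
    simp only [Set.mem_iUnion, not_exists] at h2
    exact ⟨h1, fun e he hc => h2 e he (mem_Zset_snoc.2 ⟨h1, hc⟩)⟩
  · rintro ⟨h1, h2⟩
    refine ⟨h1, ?_⟩
    simp only [Set.mem_iUnion, not_exists]
    exact fun e he hz => h2 e he (mem_Zset_snoc.1 hz).2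

lemma Zminus_empty (μ : Walk G) : G.Zminus μ ∅ = G.Zset μ := by
  unfold Zminus
  simp

lemma Zset_prefW_mono {x : G.BP} {m n : ℕ} (h : m ≤ n) :
    G.Zset (prefW x n) ⊆ G.Zset (prefW x m) := by
  intro y hy
  rw [mem_Zset_iff] at hy ⊢
  refine ⟨by rw [hy.1, prefW_src, prefW_src], fun i e he => ?_⟩
  rw [prefW_edges_getElem?] at he
  apply hy.2
  rw [prefW_edges_getElem?]
  split at he
  · rename_i hi
    rw [if_pos (by omega)]
    exact he
  · cases he

lemma Zminus_anti {μ : Walk G} {F₁ F₂ : Set G.E} (h : F₁ ⊆ F₂) :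
    G.Zminus μ F₂ ⊆ G.Zminus μ F₁ := by
  intro y hy
  rw [mem_Zminus_iff] at hy ⊢
  exact ⟨hy.1, fun e he => hy.2 e (h he)⟩

/-- The neighbourhood-basis lemma. -/
lemma exists_basic_subset {O : Set G.XB} (hO : IsOpen O) :
    ∀ x ∈ O,
      (∀ ξ, x.1 = Sum.inr ξ → ∃ n, G.Zset (prefW x.1 n) ⊆ O) ∧
      (∀ α, x.1 = Sum.inl α → ∃ F : Set G.E, F.Finite ∧ (∀ e ∈ F, G.s e = α.rng) ∧
        G.Zminus α F ⊆ O) := by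
  have hO' : TopologicalSpace.GenerateOpen
      {S | ∃ (μ : Walk G) (F : Set G.E), G.IsPath μ ∧ F.Finite ∧
          (∀ e ∈ F, G.s e = μ.rng) ∧ S = G.Zminus μ F} O := hO
  clear hO
  induction hO' with
  | basic S hS =>
    obtain ⟨μ, F, hμ, hF, hsF, rfl⟩ := hS
    intro x hx
    rw [mem_Zminus_iff] at hx
    obtain ⟨hxZ, hxF⟩ := hx
    have hxsrc := (mem_Zset_iff.1 hxZ).1
    have hxe := (mem_Zset_iff.1 hxZ).2
    constructor
    · rintro ξ hξ
      refine ⟨μ.edges.length + 1, fun y hy => ?_⟩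
      rw [mem_Zset_iff] at hy
      rw [mem_Zminus_iff]
      have hysrc : G.bsrc y.1 = μ.src := by
        rw [hy.1, prefW_src, hxsrc]
      refine ⟨mem_Zset_iff.2 ⟨hysrc, fun i e he => ?_⟩, fun e he => ?_⟩
      · have hi : i < μ.edges.length := (List.getElem?_eq_some_iff.1 he).1
        apply hy.2
        rw [prefW_edges_getElem?, if_pos (by omega)]
        exact hxe i e he
      · have h1 : eA x.1 μ.edges.length = some (ξ μ.edges.length) := by
          rw [hξ]; rfl
        have h2 : eA y.1 μ.edges.length = some (ξ μ.edges.length) := by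
          apply hy.2
          rw [prefW_edges_getElem?, if_pos (by omega), h1]
        rw [h2]
        intro hc
        exact hxF e he (by rw [h1, hc])
    · rintro α hα
      have hae : ∀ (i : ℕ) (e : G.E), μ.edges[i]? = some e → α.edges[i]? = some e := by
        intro i e he
        have := hxe i e he
        rwa [hα, eA_inl] at this
      have hlen : μ.edges.length ≤ α.edges.length := by
        rcases Nat.eq_zero_or_pos μ.edges.length with h0 | h0
        · omega
        · obtain ⟨e, he⟩ : ∃ e, μ.edges[μ.edges.length - 1]? = some e := by
            refine Option.isSome_iff_exists.1 ?_
            rw [getElem?_isSome_iff]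
            omega
          have := (List.getElem?_eq_some_iff.1 (hae _ _ he)).1
          omega
      have hasrc : α.src = μ.src := by rw [hα] at hxsrc; exact hxsrc
      rcases eq_or_lt_of_le hlen with heq | hlt
      · -- α = μ
        have hedges : α.edges = μ.edges := by
          apply List.ext_getElem?
          intro i
          by_cases hi : i < μ.edges.length
          · obtain ⟨e, he⟩ : ∃ e, μ.edges[i]? = some e :=
              Option.isSome_iff_exists.1 (getElem?_isSome_iff.2 hi)
            rw [he, hae i e he]
          · rw [List.getElem?_eq_none (l := α.edges) (by omega),
              List.getElem?_eq_none (l := μ.edges) (by omega)]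
        have : α = μ := by
          cases α
          cases μ
          simp only at hasrc hedges
          rw [hasrc, hedges]
        subst this
        exact ⟨F, hF, hsF, subset_rfl⟩
      · refine ⟨∅, Set.finite_empty, by simp, ?_⟩
        rw [Zminus_empty]
        intro y hy
        rw [mem_Zset_iff] at hy
        rw [mem_Zminus_iff]
        refine ⟨mem_Zset_iff.2 ⟨by rw [hy.1, hasrc], fun i e he => ?_⟩, fun e he => ?_⟩
        · exact hy.2 i e (hae i e he)
        · obtain ⟨f, hf⟩ : ∃ f, α.edges[μ.edges.length]? = some f :=
            Option.isSome_iff_exists.1 (getElem?_isSome_iff.2 hlt)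
          have h2 : eA y.1 μ.edges.length = some f := hy.2 _ f hf
          have h3 : eA x.1 μ.edges.length = some f := by rw [hα, eA_inl, hf]
          rw [h2]
          intro hc
          exact hxF e he (by rw [h3, hc])
  | univ =>
    intro x hx
    constructor
    · intro ξ hξ
      exact ⟨0, fun y _ => trivial⟩
    · intro α hα
      exact ⟨∅, Set.finite_empty, by simp, fun y _ => trivial⟩
  | inter O₁ O₂ h₁ h₂ ih₁ ih₂ =>
    intro x hx
    obtain ⟨hi₁, hf₁⟩ := ih₁ x hx.1
    obtain ⟨hi₂, hf₂⟩ := ih₂ x hx.2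
    constructor
    · intro ξ hξ
      obtain ⟨n₁, hn₁⟩ := hi₁ ξ hξ
      obtain ⟨n₂, hn₂⟩ := hi₂ ξ hξ
      exact ⟨max n₁ n₂, fun y hy =>
        ⟨hn₁ (Zset_prefW_mono (x := x.1) (le_max_left _ _) hy),
         hn₂ (Zset_prefW_mono (x := x.1) (le_max_right _ _) hy)⟩⟩
    · intro α hα
      obtain ⟨F₁, hF₁, hs₁, hsub₁⟩ := hf₁ α hα
      obtain ⟨F₂, hF₂, hs₂, hsub₂⟩ := hf₂ α hα
      refine ⟨F₁ ∪ F₂, hF₁.union hF₂, ?_, fun y hy => ⟨hsub₁ (Zminus_anti Set.subset_union_left hy),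
        hsub₂ (Zminus_anti Set.subset_union_right hy)⟩⟩
      rintro e (he | he)
      exacts [hs₁ e he, hs₂ e he]
  | sUnion 𝒮 h ih =>
    intro x hx
    obtain ⟨T, hT, hxT⟩ := hx
    obtain ⟨hiT, hfT⟩ := ih T hT x hxT
    constructor
    · intro ξ hξ
      obtain ⟨n, hn⟩ := hiT ξ hξ
      exact ⟨n, hn.trans (Set.subset_sUnion_of_mem hT)⟩
    · intro α hα
      obtain ⟨F, h1, h2, h3⟩ := hfT α hα
      exact ⟨F, h1, h2, h3.trans (Set.subset_sUnion_of_mem hT)⟩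

end DirGraph
namespace DirGraph
variable {G : DirGraph}

lemma walk_ext {p q : Walk G} (h1 : p.src = q.src) (h2 : p.edges = q.edges) : p = q := by
  cases p; cases q; simp only at h1 h2; rw [h1, h2]

lemma eq_of_eA {x y : G.XB} (hsrc : G.bsrc x.1 = G.bsrc y.1)
    (h : ∀ n, eA x.1 n = eA y.1 n) : x = y := by
  apply Subtype.ext
  rcases hx : x.1 with α | ξ <;> rcases hy : y.1 with β | ζ <;> rw [hx, hy] at hsrc h
  · congr 1
    apply walk_ext hsrc
    apply List.ext_getElem?
    intro n
    exact h n
  · exfalso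
    have h1 := h α.edges.length
    rw [eA_inl, List.getElem?_eq_none (le_refl _)] at h1
    exact absurd h1 (by simp)
  · exfalso
    have h1 := h β.edges.length
    rw [eA_inl, List.getElem?_eq_none (le_refl _)] at h1
    exact absurd h1 (by simp)
  · congr 1
    funext n
    have h1 := h n
    rw [eA_inr, eA_inr, Option.some_inj] at h1
    exact h1

lemma mem_Zset_prefW_self (x : G.XB) (m : ℕ) : x ∈ G.Zset (prefW x.1 m) := by
  rw [mem_Zset_iff]
  refine ⟨(prefW_src x.1 m).symm, fun i e he => ?_⟩
  rw [prefW_edges_getElem?] at he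
  split at he
  · exact he
  · cases he

lemma mem_Zset_self (x : G.XB) {α : Walk G} (hα : x.1 = Sum.inl α) : x ∈ G.Zset α := by
  rw [mem_Zset_iff, hα]
  exact ⟨rfl, fun i e he => he⟩

lemma prefW_eq_of_agree {x y : G.XB} (hsrc : G.bsrc x.1 = G.bsrc y.1) {n : ℕ}
    (hmin : ∀ i < n, eA x.1 i = eA y.1 i) : prefW x.1 n = prefW y.1 n := by
  apply walk_ext
  · rw [prefW_src, prefW_src, hsrc]
  · apply List.ext_getElem?
    intro i
    rw [prefW_edges_getElem?, prefW_edges_getElem?]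
    split
    · rename_i hi; exact hmin i hi
    · rfl

lemma sep_some_some {x y : G.XB} {n : ℕ}
    (hmin : ∀ i < n, eA x.1 i = eA y.1 i) {e f : G.E}
    (hxn : eA x.1 n = some e) (hyn : eA y.1 n = some f) (hef : e ≠ f) :
    ∃ u v : Set G.XB, IsOpen u ∧ IsOpen v ∧ x ∈ u ∧ y ∈ v ∧ Disjoint u v := by
  refine ⟨G.Zset (prefW x.1 (n + 1)), G.Zset (prefW y.1 (n + 1)),
    isOpen_Zset (isPath_prefW x.2 _), isOpen_Zset (isPath_prefW y.2 _),
    mem_Zset_prefW_self x _, mem_Zset_prefW_self y _, ?_⟩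
  rw [Set.disjoint_left]
  intro z hzx hzy
  have h1 : eA z.1 n = some e := by
    apply (mem_Zset_iff.1 hzx).2
    rw [prefW_edges_getElem?, if_pos (by omega), hxn]
  have h2 : eA z.1 n = some f := by
    apply (mem_Zset_iff.1 hzy).2
    rw [prefW_edges_getElem?, if_pos (by omega), hyn]
  rw [h1] at h2
  exact hef (Option.some_inj.1 h2)

lemma sep_some_none {x y : G.XB} {n : ℕ} (hsrc : G.bsrc x.1 = G.bsrc y.1)
    (hmin : ∀ i < n, eA x.1 i = eA y.1 i) {e : G.E}
    (hxn : eA x.1 n = some e) (hyn : eA y.1 n = none) :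
    ∃ u v : Set G.XB, IsOpen u ∧ IsOpen v ∧ x ∈ u ∧ y ∈ v ∧ Disjoint u v := by
  obtain ⟨β, hβ⟩ : ∃ β, y.1 = Sum.inl β := by
    rcases hy : y.1 with β | ζ
    · exact ⟨β, rfl⟩
    · rw [hy] at hyn; exact absurd hyn (by simp)
  have hβn : β.edges.length = n := by
    rw [hβ, eA_inl] at hyn
    have hle : β.edges.length ≤ n := by
      by_contra hc
      rw [List.getElem?_eq_none_iff] at hyn
      omega
    rcases eq_or_lt_of_le hle with h | h
    · exact h
    · exfalso
      have h1 := hmin β.edges.length h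
      have h2 : (eA x.1 β.edges.length).isSome :=
        eA_some_mono (x := x.1) (n := n) (by rw [hxn]; rfl) (by omega)
      rw [h1, hβ, eA_inl, List.getElem?_eq_none (le_refl _)] at h2
      exact Bool.noConfusion h2
  have hβpref : prefW y.1 n = β := by
    rw [hβ]
    refine walk_ext ?_ ?_
    · rfl
    · show β.edges.take n = β.edges
      rw [List.take_of_length_le (by omega)]
  have hse : G.s e = β.rng := by
    rw [s_eA_eq_rng_prefW x.2 hxn, prefW_eq_of_agree hsrc hmin, hβpref]
  have hyb : G.IsPath β := by
    have h := y.2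
    rw [hβ] at h
    exact h.1
  refine ⟨G.Zset (prefW x.1 (n + 1)), G.Zminus β {e},
    isOpen_Zset (isPath_prefW x.2 _),
    isOpen_Zminus hyb (Set.finite_singleton e) (by simpa using hse), ?_, ?_, ?_⟩
  · exact mem_Zset_prefW_self x _
  · rw [mem_Zminus_iff]
    refine ⟨mem_Zset_self y hβ, ?_⟩
    intro f hf
    rw [hβn, hβ, eA_inl, List.getElem?_eq_none (by omega)]
    simp
  · rw [Set.disjoint_left]
    intro z hzx hzy
    have h1 : eA z.1 n = some e := by
      apply (mem_Zset_iff.1 hzx).2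
      rw [prefW_edges_getElem?, if_pos (by omega), hxn]
    have h2 := (mem_Zminus_iff.1 hzy).2 e rfl
    rw [hβn] at h2
    exact h2 h1

theorem XB_t2 (G : DirGraph) : ∀ x y : G.XB, x ≠ y →
    ∃ u v : Set G.XB, IsOpen u ∧ IsOpen v ∧ x ∈ u ∧ y ∈ v ∧ Disjoint u v := by
  intro x y hxy
  by_cases hsrc : G.bsrc x.1 = G.bsrc y.1
  · have hne : ∃ n, eA x.1 n ≠ eA y.1 n := by
      by_contra hc
      push_neg at hc
      exact hxy (eq_of_eA hsrc hc)
    classical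
    obtain ⟨n, hn, hmin⟩ : ∃ n, eA x.1 n ≠ eA y.1 n ∧ ∀ i < n, eA x.1 i = eA y.1 i := by
      refine ⟨Nat.find hne, Nat.find_spec hne, fun i hi => ?_⟩
      by_contra hc
      exact absurd hi (not_lt.2 (Nat.find_le hc))
    rcases hx : eA x.1 n with _ | e <;> rcases hy : eA y.1 n with _ | f
    · rw [hx, hy] at hn; exact absurd rfl hn
    · obtain ⟨u, v, h1, h2, h3, h4, h5⟩ :=
        sep_some_none hsrc.symm (fun i hi => (hmin i hi).symm) hy hx
      exact ⟨v, u, h2, h1, h4, h3, h5.symm⟩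
    · exact sep_some_none hsrc hmin hx hy
    · exact sep_some_some hmin hx hy (by rw [hx, hy] at hn; simpa using hn)
  · refine ⟨G.Zset ⟨G.bsrc x.1, []⟩, G.Zset ⟨G.bsrc y.1, []⟩, isOpen_Zv _, isOpen_Zv _,
      mem_Zv.2 rfl, mem_Zv.2 rfl, ?_⟩
    rw [Set.disjoint_left]
    intro z hzx hzy
    rw [mem_Zv] at hzx hzy
    rw [hzx] at hzy
    exact hsrc hzy

instance (G : DirGraph) : T2Space G.XB := ⟨fun {x y} h => by
  obtain ⟨u, v, h1, h2, h3, h4, h5⟩ := XB_t2 G x y h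
  exact ⟨u, v, h1, h2, h3, h4, h5⟩⟩

end DirGraph
namespace DirGraph
variable {G : DirGraph}

lemma exists_bp (G : DirGraph) (v : G.V) : ∃ x : G.XB, G.bsrc x.1 = v := by
  classical
  by_cases h : ∃ p : Walk G, G.IsPath p ∧ p.src = v ∧ (G.IsSink p.rng ∨ G.InfEmitter p.rng)
  · obtain ⟨p, hp, hsrc, hb⟩ := h
    exact ⟨⟨Sum.inl p, hp, hb⟩, hsrc⟩
  · -- every path from `v` can be extended
    push_neg at h
    have hstep : ∀ p : Walk G, G.IsPath p → p.src = v → ∃ e, G.s e = p.rng := by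
      intro p hp hsrc
      have := (h p hp hsrc).1
      by_contra hc
      push_neg at hc
      exact this fun e => hc e
    -- iterate
    let T := {p : Walk G // G.IsPath p ∧ p.src = v}
    let step : T → T := fun p =>
      ⟨⟨p.1.src, p.1.edges ++ [Classical.choose (hstep p.1 p.2.1 p.2.2)]⟩,
        isPath_snoc p.2.1 (Classical.choose_spec (hstep p.1 p.2.1 p.2.2)), p.2.2⟩
    let seq : ℕ → T := fun n => step^[n] ⟨⟨v, []⟩, isPath_nil v, rfl⟩
    let E : ℕ → G.E := fun n => Classical.choose (hstep (seq n).1 (seq n).2.1 (seq n).2.2)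
    have hsE : ∀ n, G.s (E n) = (seq n).1.rng := fun n =>
      Classical.choose_spec (hstep (seq n).1 (seq n).2.1 (seq n).2.2)
    have hsucc : ∀ n, seq (n + 1) = step (seq n) := fun n =>
      Function.iterate_succ_apply' step n _
    have hrng : ∀ n, (seq (n + 1)).1.rng = G.r (E n) := by
      intro n
      rw [hsucc n]
      exact rng_concat _ _ _
    have hinf : G.IsInfPath E := by
      intro n
      rw [← hrng n, ← hsE (n + 1)]
    refine ⟨⟨Sum.inr E, hinf⟩, ?_⟩
    show G.s (E 0) = v
    rw [hsE 0]
    show Walk.rng ⟨v, []⟩ = v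
    exact rng_nil v

end DirGraph
namespace DirGraph
variable {G : DirGraph}

lemma graft_mem_Zset {ν : Walk G} (z : G.XB) (hν : G.IsPath ν) (hr : ν.rng = G.bsrc z.1) :
    graftX ν z hν hr ∈ G.Zset ν := by
  rw [mem_Zset_iff]
  refine ⟨bsrc_concatBP hν hr, fun i f hf => ?_⟩
  show eA (G.concatBP ν z.1) i = some f
  rw [eA_concatBP, if_pos (List.getElem?_eq_some_iff.1 hf).1]
  exact hf

lemma graft_snoc_mem_Zminus {α : Walk G} {e : G.E} {F : Set G.E} (heF : e ∉ F)
    (z : G.XB) (hν : G.IsPath ⟨α.src, α.edges ++ [e]⟩)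
    (hr : Walk.rng ⟨α.src, α.edges ++ [e]⟩ = G.bsrc z.1) :
    graftX ⟨α.src, α.edges ++ [e]⟩ z hν hr ∈ G.Zminus α F := by
  have hlen : (Walk.mk α.src (α.edges ++ [e]) : Walk G).edges.length = α.edges.length + 1 := by
    simp
  rw [mem_Zminus_iff]
  constructor
  · rw [mem_Zset_iff]
    refine ⟨bsrc_concatBP hν hr, fun i f hf => ?_⟩
    have hi : i < α.edges.length := (List.getElem?_eq_some_iff.1 hf).1
    show eA (G.concatBP ⟨α.src, α.edges ++ [e]⟩ z.1) i = some f
    rw [eA_concatBP, if_pos (by rw [hlen]; omega)]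
    show (α.edges ++ [e])[i]? = some f
    rw [List.getElem?_append_left hi]
    exact hf
  · intro f hf
    show eA (G.concatBP ⟨α.src, α.edges ++ [e]⟩ z.1) α.edges.length ≠ some f
    rw [eA_concatBP, if_pos (by rw [hlen]; omega)]
    show (α.edges ++ [e])[α.edges.length]? ≠ some f
    rw [List.getElem?_concat_length]
    intro hc
    cases hc
    exact heF hf

/-- KEY LEMMA: a point of a compact open invariant set either has a tail whose
source-cylinder is contained in the set, or it is a finite path ending at an
infinite emitter almost all of whose outgoing edges have source-cylinders
contained in the set. -/
lemma key_lemma {W : Set G.XB} (hW : G.COI W) {x : G.XB} (hx : x ∈ W) :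
    (∃ n, G.Zset ⟨G.bsrc (tlB x.1 n), []⟩ ⊆ W) ∨
    (∃ α, x.1 = Sum.inl α ∧ G.InfEmitter α.rng ∧
      {e | G.s e = α.rng ∧ ¬ G.Zset ⟨G.r e, []⟩ ⊆ W}.Finite) := by
  obtain ⟨hWc, hWo, hWi⟩ := hW
  rcases hx1 : x.1 with α | ξ
  · -- finite boundary path
    have hxb : G.IsBoundary (Sum.inl α : G.BP) := hx1 ▸ x.2
    have hb : G.IsPath α ∧ (G.IsSink α.rng ∨ G.InfEmitter α.rng) := hxb
    rcases hb.2 with hsink | hinf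
    · -- ends at a sink
      left
      refine ⟨α.edges.length, ?_⟩
      have hv : G.bsrc (tlB (Sum.inl α : G.BP) α.edges.length) = α.rng := by
        rw [bsrc_tlB hxb]
        show Walk.rng ⟨α.src, α.edges.take α.edges.length⟩ = α.rng
        rw [List.take_length]
      intro y hy
      have hysrc : G.bsrc y.1 = α.rng := by rw [mem_Zv] at hy; rw [hy, hv]
      have hyeA : ∀ m, eA y.1 m = none := by
        intro m
        by_contra hc
        have h0 : (eA y.1 0).isSome :=
          eA_some_mono (x := y.1) (n := m) (Option.ne_none_iff_isSome.1 hc) (Nat.zero_le m)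
        obtain ⟨e, he⟩ := Option.isSome_iff_exists.1 h0
        exact hsink e (by rw [eA_head y.2 he, hysrc])
      have hyt : y = tlX x α.edges.length := by
        apply eq_of_eA
        · show G.bsrc y.1 = G.bsrc (tlB x.1 α.edges.length)
          rw [hx1, hysrc, hv]
        · intro m
          show eA y.1 m = eA (tlB x.1 α.edges.length) m
          rw [hx1, hyeA m]
          show (none : Option G.E) = (α.edges.drop α.edges.length)[m]?
          rw [List.drop_length]
          simp
      rw [hyt]
      exact hWi x _ (tailEquiv_tl x _) hx
    · -- ends at an infinite emitter
      by_cases hL : ∃ n, G.Zset ⟨G.bsrc (tlB (Sum.inl α : G.BP) n), []⟩ ⊆ W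
      · exact Or.inl hL
      right
      refine ⟨α, rfl, hinf, ?_⟩
      by_contra hBad
      have hBadInf : {e | G.s e = α.rng ∧ ¬ G.Zset ⟨G.r e, []⟩ ⊆ W}.Infinite := hBad
      obtain ⟨F, hFfin, hFs, hFsub⟩ := (exists_basic_subset hWo x hx).2 α hx1
      obtain ⟨e, he, heF⟩ := (hBadInf.diff hFfin).nonempty
      obtain ⟨z, hz1, hz2⟩ := Set.not_subset.1 he.2
      have hzsrc : G.r e = G.bsrc z.1 := (mem_Zv.1 hz1).symm
      have hν : G.IsPath ⟨α.src, α.edges ++ [e]⟩ := isPath_snoc hb.1 he.1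
      have hr : Walk.rng ⟨α.src, α.edges ++ [e]⟩ = G.bsrc z.1 := by
        rw [rng_concat]; exact hzsrc
      have hqW : graftX _ z hν hr ∈ W :=
        hFsub (graft_snoc_mem_Zminus heF z hν hr)
      exact hz2 (hWi _ z (tailEquiv_symm (tailEquiv_graft _ z hν hr)) hqW)
  · -- infinite path
    have hxb : G.IsBoundary (Sum.inr ξ : G.BP) := hx1 ▸ x.2
    left
    by_contra hc
    push_neg at hc
    obtain ⟨n, hn⟩ := (exists_basic_subset hWo x hx).1 ξ hx1
    rw [hx1] at hn
    obtain ⟨z, hz1, hz2⟩ := Set.not_subset.1 (hc n)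
    have hr : (prefW (Sum.inr ξ : G.BP) n).rng = G.bsrc z.1 := by
      rw [← bsrc_tlB hxb n]
      exact (mem_Zv.1 hz1).symm
    have hqW : graftX _ z (isPath_prefW hxb n) hr ∈ W :=
      hn (graft_mem_Zset z (isPath_prefW hxb n) hr)
    exact hz2 (hWi _ z (tailEquiv_symm (tailEquiv_graft _ z _ hr)) hqW)

/-- TRANSFER: a compact open invariant set is determined (monotonely) by the family of
vertex cylinders it contains. -/
lemma coi_subset_of_cyl_subset {W₁ W₂ : Set G.XB} (h₁ : G.COI W₁) (h₂ : G.COI W₂)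
    (hH : ∀ v, G.Zset ⟨v, []⟩ ⊆ W₁ → G.Zset ⟨v, []⟩ ⊆ W₂) : W₁ ⊆ W₂ := by
  intro x hx
  rcases key_lemma h₁ hx with ⟨n, hZ⟩ | ⟨α, hα, hinf, hBadfin⟩
  · have htl : tlX x n ∈ W₂ := hH _ hZ (mem_Zv.2 rfl)
    exact h₂.2.2 _ x (tailEquiv_symm (tailEquiv_tl x n)) htl
  · by_contra hxc
    have hb : G.IsPath α ∧ (G.IsSink α.rng ∨ G.InfEmitter α.rng) := by
      have := x.2; rwa [hα] at this
    have hWc : IsOpen W₂ᶜ := isOpen_compl_iff.2 h₂.1.isClosed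
    obtain ⟨F, hFfin, hFs, hFsub⟩ := (exists_basic_subset hWc x hxc).2 α hα
    obtain ⟨e, hegood, heF⟩ :=
      (((hinf.diff hBadfin).diff hFfin)).nonempty
    obtain ⟨hes, heBad⟩ := hegood
    have heW₁ : G.Zset ⟨G.r e, []⟩ ⊆ W₁ := by
      by_contra hc
      exact heBad ⟨hes, hc⟩
    obtain ⟨z, hzsrc⟩ := exists_bp G (G.r e)
    have hzW₂ : z ∈ W₂ := hH _ heW₁ (mem_Zv.2 hzsrc)
    have hν : G.IsPath ⟨α.src, α.edges ++ [e]⟩ := isPath_snoc hb.1 hes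
    have hr : Walk.rng ⟨α.src, α.edges ++ [e]⟩ = G.bsrc z.1 := by
      rw [rng_concat]; exact hzsrc.symm
    have hqW₂ : graftX _ z hν hr ∈ W₂ :=
      h₂.2.2 z _ (tailEquiv_graft _ z hν hr) hzW₂
    exact (hFsub (graft_snoc_mem_Zminus heF z hν hr)) hqW₂

end DirGraph
namespace DirGraph
variable {G : DirGraph}

lemma invariant_compl {W : Set G.XB} (h : G.InvariantX W) : G.InvariantX Wᶜ := by
  intro a b hab ha hb
  exact ha (h b a (tailEquiv_symm hab) hb)

lemma invariant_inter {W₁ W₂ : Set G.XB} (h₁ : G.InvariantX W₁) (h₂ : G.InvariantX W₂) :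
    G.InvariantX (W₁ ∩ W₂) := fun a b hab ha => ⟨h₁ a b hab ha.1, h₂ a b hab ha.2⟩

lemma finite_srcs {U : Set G.XB} (hU : IsCompact U) :
    {v | (G.Zset ⟨v, []⟩ ∩ U).Nonempty}.Finite := by
  obtain ⟨t, ht⟩ := hU.elim_finite_subcover (fun v => G.Zset ⟨v, []⟩)
    (fun v => isOpen_Zv v) (fun x _ => Set.mem_iUnion.2 ⟨G.bsrc x.1, mem_Zv.2 rfl⟩)
  apply t.finite_toSet.subset
  rintro v ⟨x, hxZ, hxU⟩
  obtain ⟨w, hw, hxw⟩ := Set.mem_iUnion₂.1 (ht hxU)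
  rw [mem_Zv] at hxZ hxw
  rwa [show v = w by rw [← hxZ, hxw]]

/-- There are only finitely many compact open invariant subsets of a compact open
invariant set. -/
lemma coi_in_finite {U : Set G.XB} (hU : G.COI U) : {W | G.COI W ∧ W ⊆ U}.Finite := by
  classical
  have hVU : {v | (G.Zset ⟨v, []⟩ ∩ U).Nonempty}.Finite := finite_srcs hU.1
  set Φ : Set G.XB → Set G.V :=
    fun W => {v | (G.Zset ⟨v, []⟩ ∩ U).Nonempty ∧ G.Zset ⟨v, []⟩ ⊆ W} with hΦdef
  have hmono : ∀ W₁ W₂, G.COI W₁ → W₁ ⊆ U → G.COI W₂ → Φ W₁ ⊆ Φ W₂ → W₁ ⊆ W₂ := by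
    intro W₁ W₂ h₁ hsub₁ h₂ hΦ
    apply coi_subset_of_cyl_subset h₁ h₂
    intro v hv
    by_cases hne : (G.Zset ⟨v, []⟩ ∩ U).Nonempty
    · exact (hΦ ⟨hne, hv⟩).2
    · have : G.Zset ⟨v, []⟩ = ∅ := by
        rw [Set.not_nonempty_iff_eq_empty] at hne
        rw [← hne]
        exact Set.subset_inter subset_rfl (hv.trans hsub₁) |>.antisymm Set.inter_subset_left
      rw [this]
      exact Set.empty_subset _
  apply Set.Finite.of_finite_image (f := Φ)
  · apply hVU.finite_subsets.subset
    rintro S ⟨W, _, rfl⟩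
    intro v hv
    exact hv.1
  · rintro W₁ ⟨h₁, hsub₁⟩ W₂ ⟨h₂, hsub₂⟩ hΦ
    exact (hmono W₁ W₂ h₁ hsub₁ h₂ (le_of_eq hΦ)).antisymm
      (hmono W₂ W₁ h₂ hsub₂ h₁ (le_of_eq hΦ.symm))

/-- Every point of a compact open invariant set lies in a minimal one. -/
lemma exists_minimal_coi {U : Set G.XB} (hU : G.COI U) {x : G.XB} (hx : x ∈ U) :
    ∃ M, M ⊆ U ∧ G.MinCOI M ∧ x ∈ M := by
  classical
  set C : Set (Set G.XB) := {W | (G.COI W ∧ W ⊆ U) ∧ x ∈ W} with hC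
  have hCfin : C.Finite := (coi_in_finite hU).subset (fun W hW => hW.1)
  have hUC : U ∈ C := ⟨⟨hU, subset_rfl⟩, hx⟩
  set M : Set G.XB := ⋂₀ C with hM
  have hMU : M ⊆ U := Set.sInter_subset_of_mem hUC
  have hxM : x ∈ M := Set.mem_sInter.2 fun W hW => hW.2
  have hMopen : IsOpen M := hCfin.isOpen_sInter fun W hW => hW.1.1.2.1
  have hMclosed : IsClosed M := isClosed_sInter fun W hW => hW.1.1.1.isClosed
  have hMcompact : IsCompact M := hU.1.of_isClosed_subset hMclosed hMU
  have hMinv : G.InvariantX M := by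
    intro a b hab ha
    rw [Set.mem_sInter] at ha ⊢
    exact fun W hW => hW.1.1.2.2 a b hab (ha W hW)
  have hMcoi : G.COI M := ⟨hMcompact, hMopen, hMinv⟩
  refine ⟨M, hMU, ⟨hMcoi, ⟨x, hxM⟩, ?_⟩, hxM⟩
  intro W' hW' hW'M
  by_cases hxW' : x ∈ W'
  · right
    exact hW'M.antisymm (Set.sInter_subset_of_mem ⟨⟨hW', hW'M.trans hMU⟩, hxW'⟩)
  · left
    set D : Set G.XB := M ∩ W'ᶜ with hD
    have hDopen : IsOpen D := hMopen.inter (isOpen_compl_iff.2 hW'.1.isClosed)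
    have hDclosed : IsClosed D := hMclosed.inter (isClosed_compl_iff.2 hW'.2.1)
    have hDcoi : G.COI D :=
      ⟨hMcompact.of_isClosed_subset hDclosed Set.inter_subset_left, hDopen,
        invariant_inter hMinv (invariant_compl hW'.2.2)⟩
    have hDC : D ∈ C := ⟨⟨hDcoi, Set.inter_subset_left.trans hMU⟩, ⟨hxM, hxW'⟩⟩
    have hMD : M ⊆ D := Set.sInter_subset_of_mem hDC
    rw [Set.eq_empty_iff_forall_notMem]
    intro y hy
    exact (hMD (hW'M hy)).2 hy

end DirGraph
/-- every compact open invariant subset of the unit space of the graph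
groupoid is the disjoint union of the finitely many minimal compact open invariant
subsets it contains. -/
theorem coi_eq_sUnion_minimal (G : DirGraph) (U : Set G.XB) (hU : G.COI U) :
    {V | V ⊆ U ∧ G.MinCOI V}.Finite ∧
      U = ⋃₀ {V | V ⊆ U ∧ G.MinCOI V} ∧
      {V | V ⊆ U ∧ G.MinCOI V}.Pairwise Disjoint := by
  refine ⟨?_, ?_, ?_⟩
  · exact (DirGraph.coi_in_finite hU).subset fun V hV => ⟨hV.2.1, hV.1⟩
  · apply Set.eq_of_subset_of_subset
    · intro x hx
      obtain ⟨M, hMU, hMmin, hxM⟩ := DirGraph.exists_minimal_coi hU hx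
      exact Set.mem_sUnion.2 ⟨M, ⟨hMU, hMmin⟩, hxM⟩
    · exact Set.sUnion_subset fun V hV => hV.1
  · intro V₁ hV₁ V₂ hV₂ hne
    have hI : G.COI (V₁ ∩ V₂) :=
      ⟨hV₁.2.1.1.inter hV₂.2.1.1,
        hV₁.2.1.2.1.inter hV₂.2.1.2.1,
        DirGraph.invariant_inter hV₁.2.1.2.2 hV₂.2.1.2.2⟩
    rcases hV₁.2.2.2 (V₁ ∩ V₂) hI Set.inter_subset_left with h | h
    · exact Set.disjoint_iff_inter_eq_empty.2 h
    · have hsub : V₁ ⊆ V₂ := by rw [← h]; exact Set.inter_subset_right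
      rcases hV₂.2.2.2 V₁ hV₁.2.1 hsub with h1 | h1
      · exact absurd (h1 ▸ hV₁.2.2.1) (by simp)
      · exact absurd h1 hne
end

section
/- Let E be a directed graph, R a commutative unital ring, H a finite hereditary saturated subset of E^0 satisfying Condition (F) with B_H = ∅ and with F_E'(H) = F_E(H) finite. Then the element a = Σ_{v∈H} v + Σ_{α∈F_E(H)} αα* of the Leavitt path algebra L_R(E) is central: ab = ba for all b ∈ L_R(E). -/
/-- Generators of the Leavitt path algebra: vertices, edges, and ghost edges. -/
inductive LGen (G : DirGraph) : Type
  | vert : G.V → LGen G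
  | edge : G.E → LGen G
  | ghost : G.E → LGen G

/-- The defining relations (V), (E1), (E2), (CK1), (CK2) of the Leavitt path algebra. -/
inductive LeavittRel (R : Type) [CommRing R] (G : DirGraph) :
    FreeAlgebra R (LGen G) → FreeAlgebra R (LGen G) → Prop
  | v_same (v : G.V) : LeavittRel R G
      (FreeAlgebra.ι R (LGen.vert v) * FreeAlgebra.ι R (LGen.vert v))
      (FreeAlgebra.ι R (LGen.vert v))
  | v_diff (v w : G.V) (h : v ≠ w) : LeavittRel R G
      (FreeAlgebra.ι R (LGen.vert v) * FreeAlgebra.ι R (LGen.vert w)) 0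
  | e1_left (e : G.E) : LeavittRel R G
      (FreeAlgebra.ι R (LGen.vert (G.s e)) * FreeAlgebra.ι R (LGen.edge e))
      (FreeAlgebra.ι R (LGen.edge e))
  | e1_right (e : G.E) : LeavittRel R G
      (FreeAlgebra.ι R (LGen.edge e) * FreeAlgebra.ι R (LGen.vert (G.r e)))
      (FreeAlgebra.ι R (LGen.edge e))
  | e2_left (e : G.E) : LeavittRel R G
      (FreeAlgebra.ι R (LGen.vert (G.r e)) * FreeAlgebra.ι R (LGen.ghost e))
      (FreeAlgebra.ι R (LGen.ghost e))
  | e2_right (e : G.E) : LeavittRel R G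
      (FreeAlgebra.ι R (LGen.ghost e) * FreeAlgebra.ι R (LGen.vert (G.s e)))
      (FreeAlgebra.ι R (LGen.ghost e))
  | ck1_same (e : G.E) : LeavittRel R G
      (FreeAlgebra.ι R (LGen.ghost e) * FreeAlgebra.ι R (LGen.edge e))
      (FreeAlgebra.ι R (LGen.vert (G.r e)))
  | ck1_diff (e f : G.E) (h : e ≠ f) : LeavittRel R G
      (FreeAlgebra.ι R (LGen.ghost e) * FreeAlgebra.ι R (LGen.edge f)) 0
  | ck2 (v : G.V) (hf : {e | G.s e = v}.Finite) (hn : {e | G.s e = v}.Nonempty) :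
      LeavittRel R G (FreeAlgebra.ι R (LGen.vert v))
        (∑ e ∈ hf.toFinset, FreeAlgebra.ι R (LGen.edge e) * FreeAlgebra.ι R (LGen.ghost e))

/-- The Leavitt path algebra `L_R(E)`. -/
abbrev Leavitt (R : Type) [CommRing R] (G : DirGraph) : Type := RingQuot (LeavittRel R G)

variable (R : Type) [CommRing R] (G : DirGraph)

/-- The vertex idempotent `v ∈ L_R(E)`. -/
def lv (v : G.V) : Leavitt R G :=
  RingQuot.mkRingHom (LeavittRel R G) (FreeAlgebra.ι R (LGen.vert v))

/-- The edge element `e ∈ L_R(E)`. -/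
def le (e : G.E) : Leavitt R G :=
  RingQuot.mkRingHom (LeavittRel R G) (FreeAlgebra.ι R (LGen.edge e))

/-- The ghost edge element `e* ∈ L_R(E)`. -/
def lg (e : G.E) : Leavitt R G :=
  RingQuot.mkRingHom (LeavittRel R G) (FreeAlgebra.ι R (LGen.ghost e))

/-- The element `α ∈ L_R(E)` associated to a path `α`. -/
def lpath (α : Walk G) : Leavitt R G :=
  lv R G α.src * (α.edges.map (le R G)).prod

/-- The ghost element `α* ∈ L_R(E)` associated to a path `α`. -/
def lstar (α : Walk G) : Leavitt R G :=
  (α.edges.reverse.map (lg R G)).prod * lv R G α.src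

open scoped Classical

namespace CE
variable {R : Type} [CommRing R] {G : DirGraph}

lemma mk_rel {x y : FreeAlgebra R (LGen G)} (h : LeavittRel R G x y) :
    RingQuot.mkRingHom (LeavittRel R G) x = RingQuot.mkRingHom (LeavittRel R G) y :=
  RingQuot.mkRingHom_rel h

lemma mk_mul_eq {x y z : FreeAlgebra R (LGen G)} (h : LeavittRel R G (x * y) z) :
    RingQuot.mkRingHom (LeavittRel R G) x * RingQuot.mkRingHom (LeavittRel R G) y
      = RingQuot.mkRingHom (LeavittRel R G) z :=
  (map_mul _ _ _).symm.trans (mk_rel h)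

lemma mk_mul_zero {x y : FreeAlgebra R (LGen G)} (h : LeavittRel R G (x * y) 0) :
    RingQuot.mkRingHom (LeavittRel R G) x * RingQuot.mkRingHom (LeavittRel R G) y = 0 :=
  ((map_mul _ _ _).symm.trans (mk_rel h)).trans (map_zero _)

variable (R G)

lemma lv_mul_lv (v w : G.V) :
    lv R G v * lv R G w = if v = w then lv R G v else 0 := by
  by_cases h : v = w
  · subst h; rw [if_pos rfl]; exact mk_mul_eq (LeavittRel.v_same v)
  · rw [if_neg h]; exact mk_mul_zero (LeavittRel.v_diff v w h)

lemma lv_mul_le_src (e : G.E) : lv R G (G.s e) * le R G e = le R G e :=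
  mk_mul_eq (LeavittRel.e1_left e)

lemma le_mul_lv_rng (e : G.E) : le R G e * lv R G (G.r e) = le R G e :=
  mk_mul_eq (LeavittRel.e1_right e)

lemma lv_mul_lg_rng (e : G.E) : lv R G (G.r e) * lg R G e = lg R G e :=
  mk_mul_eq (LeavittRel.e2_left e)

lemma lg_mul_lv_src (e : G.E) : lg R G e * lv R G (G.s e) = lg R G e :=
  mk_mul_eq (LeavittRel.e2_right e)

lemma lv_mul_le (w : G.V) (e : G.E) :
    lv R G w * le R G e = if w = G.s e then le R G e else 0 := by
  by_cases h : w = G.s e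
  · subst h; rw [if_pos rfl]; exact lv_mul_le_src R G e
  · rw [if_neg h, ← lv_mul_le_src R G e, ← mul_assoc, lv_mul_lv, if_neg h, zero_mul]

lemma le_mul_lv (e : G.E) (w : G.V) :
    le R G e * lv R G w = if w = G.r e then le R G e else 0 := by
  by_cases h : w = G.r e
  · subst h; rw [if_pos rfl]; exact le_mul_lv_rng R G e
  · rw [if_neg h, ← le_mul_lv_rng R G e, mul_assoc, lv_mul_lv, if_neg (fun hh => h hh.symm),
      mul_zero]

lemma lv_mul_lg (w : G.V) (e : G.E) :
    lv R G w * lg R G e = if w = G.r e then lg R G e else 0 := by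
  by_cases h : w = G.r e
  · subst h; rw [if_pos rfl]; exact lv_mul_lg_rng R G e
  · rw [if_neg h, ← lv_mul_lg_rng R G e, ← mul_assoc, lv_mul_lv, if_neg h, zero_mul]

lemma lg_mul_lv (e : G.E) (w : G.V) :
    lg R G e * lv R G w = if w = G.s e then lg R G e else 0 := by
  by_cases h : w = G.s e
  · subst h; rw [if_pos rfl]; exact lg_mul_lv_src R G e
  · rw [if_neg h, ← lg_mul_lv_src R G e, mul_assoc, lv_mul_lv, if_neg (fun hh => h hh.symm),
      mul_zero]

lemma lg_mul_le (e f : G.E) :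
    lg R G e * le R G f = if e = f then lv R G (G.r e) else 0 := by
  by_cases h : e = f
  · subst h; rw [if_pos rfl]; exact mk_mul_eq (LeavittRel.ck1_same e)
  · rw [if_neg h]; exact mk_mul_zero (LeavittRel.ck1_diff e f h)

lemma lpath_mk (v : G.V) (l : List G.E) :
    lpath R G ⟨v, l⟩ = lv R G v * (l.map (le R G)).prod := rfl

lemma lstar_mk (v : G.V) (l : List G.E) :
    lstar R G ⟨v, l⟩ = (l.reverse.map (lg R G)).prod * lv R G v := rfl

lemma lv_mul_lpath (w v : G.V) (l : List G.E) :
    lv R G w * lpath R G ⟨v, l⟩ = if w = v then lpath R G ⟨v, l⟩ else 0 := by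
  by_cases h : w = v
  · subst h
    simp only [eq_self_iff_true, if_true, lpath_mk, ← mul_assoc, lv_mul_lv, eq_self_iff_true, if_true]
  · simp only [h, if_false, lpath_mk, ← mul_assoc, lv_mul_lv, h, if_false, zero_mul]

lemma lstar_mul_lv (v : G.V) (l : List G.E) (w : G.V) :
    lstar R G ⟨v, l⟩ * lv R G w = if w = v then lstar R G ⟨v, l⟩ else 0 := by
  by_cases h : w = v
  · subst h
    simp only [eq_self_iff_true, if_true, lstar_mk, mul_assoc, lv_mul_lv, eq_self_iff_true, if_true]
  · simp only [h, if_false, lstar_mk, mul_assoc, lv_mul_lv, Ne.symm h, if_false, mul_zero]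

lemma rng_nil (v : G.V) : Walk.rng (⟨v, []⟩ : Walk G) = v := rfl

lemma rng_concat (v : G.V) (l : List G.E) (e : G.E) :
    Walk.rng (⟨v, l ++ [e]⟩ : Walk G) = G.r e := by
  unfold Walk.rng
  rw [List.getLast?_concat]

lemma lpath_mul_lv (v : G.V) (l : List G.E) (w : G.V) :
    lpath R G ⟨v, l⟩ * lv R G w
      = if w = Walk.rng (⟨v, l⟩ : Walk G) then lpath R G ⟨v, l⟩ else 0 := by
  rcases l.eq_nil_or_concat' with rfl | ⟨L, e, rfl⟩
  · rw [rng_nil]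
    by_cases h : w = v
    · subst h
      simp only [eq_self_iff_true, if_true, lpath_mk, List.map_nil, List.prod_nil, mul_one, lv_mul_lv,
        eq_self_iff_true, if_true]
    · simp only [h, if_false, lpath_mk, List.map_nil, List.prod_nil, mul_one, lv_mul_lv,
        Ne.symm h, if_false]
  · rw [rng_concat]
    by_cases h : w = G.r e
    · subst h
      simp only [eq_self_iff_true, if_true, lpath_mk, List.map_append, List.prod_append, List.map_singleton,
        List.prod_singleton, mul_assoc, le_mul_lv_rng]
    · simp only [h, if_false, lpath_mk, List.map_append, List.prod_append, List.map_singleton,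
        List.prod_singleton, mul_assoc, le_mul_lv, h, if_false, mul_zero]

lemma lv_mul_lstar (w v : G.V) (l : List G.E) :
    lv R G w * lstar R G ⟨v, l⟩
      = if w = Walk.rng (⟨v, l⟩ : Walk G) then lstar R G ⟨v, l⟩ else 0 := by
  rcases l.eq_nil_or_concat' with rfl | ⟨L, e, rfl⟩
  · rw [rng_nil]
    by_cases h : w = v
    · subst h
      simp only [eq_self_iff_true, if_true, lstar_mk, List.reverse_nil, List.map_nil, List.prod_nil, one_mul,
        lv_mul_lv, eq_self_iff_true, if_true]
    · simp only [h, if_false, lstar_mk, List.reverse_nil, List.map_nil, List.prod_nil, one_mul,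
        lv_mul_lv, h, if_false]
  · rw [rng_concat]
    by_cases h : w = G.r e
    · subst h
      simp only [eq_self_iff_true, if_true, lstar_mk, List.reverse_concat' L e, List.map_cons, List.prod_cons,
        ← mul_assoc, lv_mul_lg_rng]
    · simp only [h, if_false, lstar_mk, List.reverse_concat' L e, List.map_cons, List.prod_cons,
        ← mul_assoc, lv_mul_lg, h, if_false, zero_mul]

lemma lstar_cons_mul_le (e' : G.E) (l : List G.E) (e : G.E) :
    lstar R G ⟨G.s e', e' :: l⟩ * le R G e
      = if e' = e then lstar R G ⟨G.r e', l⟩ else 0 := by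
  by_cases h : e' = e
  · subst h
    simp only [eq_self_iff_true, if_true, lstar_mk, List.reverse_cons, List.map_append, List.prod_append,
      List.map_singleton, List.prod_singleton, mul_assoc, lg_mul_lv_src, lg_mul_le, eq_self_iff_true, if_true]
  · simp only [h, if_false, lstar_mk, List.reverse_cons, List.map_append, List.prod_append,
      List.map_singleton, List.prod_singleton, mul_assoc, lg_mul_lv_src, lg_mul_le, h, if_false,
      mul_zero]

lemma le_mul_lpath (e : G.E) (v : G.V) (l : List G.E) :
    le R G e * lpath R G ⟨v, l⟩
      = if v = G.r e then lpath R G ⟨G.s e, e :: l⟩ else 0 := by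
  by_cases h : v = G.r e
  · subst h
    simp only [eq_self_iff_true, if_true, lpath_mk, List.map_cons, List.prod_cons, ← mul_assoc, le_mul_lv_rng,
      lv_mul_le_src]
  · simp only [h, if_false, lpath_mk, ← mul_assoc, le_mul_lv, h, if_false, zero_mul]

lemma lstar_mul_lg (v : G.V) (l : List G.E) (e : G.E) :
    lstar R G ⟨v, l⟩ * lg R G e
      = if v = G.r e then lstar R G ⟨G.s e, e :: l⟩ else 0 := by
  by_cases h : v = G.r e
  · subst h
    simp only [eq_self_iff_true, if_true, lstar_mk, List.reverse_cons, List.map_append, List.prod_append,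
      List.map_singleton, List.prod_singleton, mul_assoc, lv_mul_lg_rng, lg_mul_lv_src]
  · simp only [h, if_false, lstar_mk, mul_assoc, lv_mul_lg, h, if_false, mul_zero]

lemma lg_mul_lpath (e e' : G.E) (l : List G.E) :
    lg R G e * lpath R G ⟨G.s e', e' :: l⟩
      = if e = e' then lpath R G ⟨G.r e', l⟩ else 0 := by
  by_cases h : e = e'
  · subst h
    simp only [eq_self_iff_true, if_true, lpath_mk, List.map_cons, List.prod_cons, ← mul_assoc, lg_mul_lv_src,
      lg_mul_le, eq_self_iff_true, if_true]
  · by_cases hs : G.s e' = G.s e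
    · simp only [h, if_false, lpath_mk, List.map_cons, List.prod_cons, ← mul_assoc, lg_mul_lv,
        hs, if_true, lg_mul_le, h, if_false, zero_mul]
    · simp only [h, if_false, lpath_mk, List.map_cons, List.prod_cons, ← mul_assoc, lg_mul_lv,
        hs, if_false, zero_mul]

end CE

namespace CE
variable {R : Type} [CommRing R] {G : DirGraph}
variable (R G)

lemma lpath_nil (v : G.V) : lpath R G ⟨v, []⟩ = lv R G v := by
  simp [lpath_mk]

lemma lstar_nil (v : G.V) : lstar R G ⟨v, []⟩ = lv R G v := by
  simp [lstar_mk]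

lemma lpath_single (e : G.E) : lpath R G ⟨G.s e, [e]⟩ = le R G e := by
  simp [lpath_mk, lv_mul_le_src]

lemma lstar_single (e : G.E) : lstar R G ⟨G.s e, [e]⟩ = lg R G e := by
  simp [lstar_mk, lg_mul_lv_src]

lemma rng_singleton (v : G.V) (e : G.E) : Walk.rng (⟨v, [e]⟩ : Walk G) = G.r e :=
  rng_concat G v [] e

variable {G}

lemma dropLast_cons_ne_nil (e : G.E) {l : List G.E} (h : l ≠ []) :
    (e :: l).dropLast = e :: l.dropLast := by
  cases l with
  | nil => exact absurd rfl h
  | cons b t => rfl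

lemma rng_cons_ne_nil (v w : G.V) (e : G.E) {l : List G.E} (h : l ≠ []) :
    Walk.rng (⟨v, e :: l⟩ : Walk G) = Walk.rng (⟨w, l⟩ : Walk G) := by
  cases l with
  | nil => exact absurd rfl h
  | cons b t =>
    show Walk.rng (⟨v, e :: b :: t⟩ : Walk G) = Walk.rng (⟨w, b :: t⟩ : Walk G)
    unfold Walk.rng
    rw [List.getLast?_cons_cons]
    rfl

lemma src_eq_of_path {v : G.V} {e : G.E} {l : List G.E}
    (hp : G.IsPath ⟨v, e :: l⟩) : v = G.s e := (hp.1 e rfl).symm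

lemma path_single (e : G.E) : G.IsPath ⟨G.s e, [e]⟩ := by
  refine ⟨?_, List.isChain_singleton e⟩
  intro f hf
  obtain rfl : e = f := by simpa using hf
  rfl

variable {H : Set G.V}

lemma FE_single {e : G.E} (hs : G.s e ∉ H) (hr : G.r e ∈ H) :
    (⟨G.s e, [e]⟩ : Walk G) ∈ G.FE H := by
  refine ⟨path_single e, by simp, hs, ?_, ?_⟩
  · intro f hf; simp at hf
  · rw [rng_singleton]; exact hr

lemma FE_cons {e : G.E} {v : G.V} {l : List G.E}
    (hβ : (⟨v, l⟩ : Walk G) ∈ G.FE H) (hv : v = G.r e) (hs : G.s e ∉ H) (hr : G.r e ∉ H) :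
    (⟨G.s e, e :: l⟩ : Walk G) ∈ G.FE H := by
  obtain ⟨⟨hhead, hchain⟩, hne, hsrc, hmid, hrng⟩ := hβ
  refine ⟨⟨?_, ?_⟩, by simp, hs, ?_, ?_⟩
  · intro f hf
    obtain rfl : e = f := by simpa using hf
    rfl
  · change List.IsChain _ (e :: l)
    rw [List.isChain_cons]
    refine ⟨fun y hy => ?_, hchain⟩
    rw [hhead y (Option.mem_def.mp hy), hv]
  · intro f hf
    rw [dropLast_cons_ne_nil e hne] at hf
    rcases List.mem_cons.mp hf with rfl | hf
    · exact hr
    · exact hmid f hf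
  · rw [rng_cons_ne_nil (G.s e) v e hne]
    exact hrng

lemma FE_tail {e : G.E} {v : G.V} {l : List G.E}
    (hα : (⟨v, e :: l⟩ : Walk G) ∈ G.FE H) (hr : G.r e ∉ H) :
    l ≠ [] ∧ (⟨G.r e, l⟩ : Walk G) ∈ G.FE H := by
  obtain ⟨⟨hhead, hchain⟩, hne, hsrc, hmid, hrng⟩ := hα
  have hlne : l ≠ [] := by
    rintro rfl
    rw [rng_singleton] at hrng
    exact hr hrng
  change List.IsChain _ (e :: l) at hchain
  rw [List.isChain_cons] at hchain
  refine ⟨hlne, ⟨fun f hf => (hchain.1 f (Option.mem_def.mpr hf)).symm, hchain.2⟩,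
    hlne, hr, ?_, ?_⟩
  · intro f hf
    exact hmid f (by rw [dropLast_cons_ne_nil e hlne]; exact List.mem_cons_of_mem e hf)
  · rw [← rng_cons_ne_nil v (G.r e) e hlne]
    exact hrng

lemma comm_lv (hHfin : H.Finite) (hFEfin : (G.FE H).Finite) (w : G.V) :
    (∑ v ∈ hHfin.toFinset, lv R G v + ∑ α ∈ hFEfin.toFinset, lpath R G α * lstar R G α)
        * lv R G w
      = lv R G w * (∑ v ∈ hHfin.toFinset, lv R G v
          + ∑ α ∈ hFEfin.toFinset, lpath R G α * lstar R G α) := by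
  rw [add_mul, mul_add, Finset.sum_mul, Finset.mul_sum, Finset.sum_mul, Finset.mul_sum]
  congr 1
  · refine Finset.sum_congr rfl fun v _ => ?_
    rw [lv_mul_lv, lv_mul_lv]
    by_cases h : v = w
    · subst h; rw [if_pos rfl]
    · rw [if_neg h, if_neg (fun hh => h hh.symm)]
  · refine Finset.sum_congr rfl fun α _ => ?_
    obtain ⟨v, l⟩ := α
    rw [mul_assoc, lstar_mul_lv, ← mul_assoc, lv_mul_lpath]
    by_cases h : w = v
    · rw [if_pos h, if_pos h]
    · rw [if_neg h, if_neg h, mul_zero, zero_mul]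

end CE

namespace CE
variable {R : Type} [CommRing R] {G : DirGraph} {H : Set G.V}

lemma comm_le (hHh : G.Hereditary H) (hHfin : H.Finite) (hFEfin : (G.FE H).Finite)
    (e : G.E) :
    (∑ v ∈ hHfin.toFinset, lv R G v + ∑ α ∈ hFEfin.toFinset, lpath R G α * lstar R G α)
        * le R G e
      = le R G e * (∑ v ∈ hHfin.toFinset, lv R G v
          + ∑ α ∈ hFEfin.toFinset, lpath R G α * lstar R G α) := by
  have hPle : (∑ v ∈ hHfin.toFinset, lv R G v) * le R G e
      = if G.s e ∈ H then le R G e else 0 := by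
    rw [Finset.sum_mul, Finset.sum_congr rfl (fun v _ => lv_mul_le R G v e),
      Finset.sum_ite_eq' hHfin.toFinset (G.s e) (fun _ => le R G e)]
    simp only [Set.Finite.mem_toFinset]
  have hleP : le R G e * (∑ v ∈ hHfin.toFinset, lv R G v)
      = if G.r e ∈ H then le R G e else 0 := by
    rw [Finset.mul_sum, Finset.sum_congr rfl (fun v _ => le_mul_lv R G e v),
      Finset.sum_ite_eq' hHfin.toFinset (G.r e) (fun _ => le R G e)]
    simp only [Set.Finite.mem_toFinset]
  have hleQ : ∀ α ∈ hFEfin.toFinset,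
      le R G e * (lpath R G α * lstar R G α)
        = if α.src = G.r e then lpath R G ⟨G.s e, e :: α.edges⟩ * lstar R G α else 0 := by
    intro α _
    obtain ⟨v, l⟩ := α
    change le R G e * (lpath R G ⟨v, l⟩ * lstar R G ⟨v, l⟩)
      = if v = G.r e then lpath R G ⟨G.s e, e :: l⟩ * lstar R G ⟨v, l⟩ else 0
    rw [← mul_assoc, le_mul_lpath]
    by_cases h : v = G.r e
    · rw [if_pos h, if_pos h]
    · rw [if_neg h, zero_mul, if_neg h]
  -- zero lemma: if `G.r e ∈ H` is impossible for sources, `le e * Q = 0`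
  have hleQ0 : G.r e ∈ H → le R G e * (∑ α ∈ hFEfin.toFinset, lpath R G α * lstar R G α)
      = 0 := by
    intro hr
    rw [Finset.mul_sum, Finset.sum_congr rfl hleQ]
    refine Finset.sum_eq_zero fun α hα => ?_
    have hsrc := (hFEfin.mem_toFinset.mp hα).2.2.1
    rw [if_neg (fun hv => hsrc (by rw [hv]; exact hr))]
  by_cases hs : G.s e ∈ H
  · -- case 1 : source in H, hence range in H
    have hr : G.r e ∈ H := by
      have := hHh ⟨G.s e, [e]⟩ (path_single e) hs
      rwa [rng_singleton] at this
    have hQle : (∑ α ∈ hFEfin.toFinset, lpath R G α * lstar R G α) * le R G e = 0 := by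
      rw [Finset.sum_mul]
      refine Finset.sum_eq_zero fun α hα => ?_
      obtain ⟨hp, hne, hsrc, hmid, hrng⟩ := hFEfin.mem_toFinset.mp hα
      obtain ⟨v, l0⟩ := α
      obtain ⟨f, t, rfl⟩ := List.exists_cons_of_ne_nil hne
      obtain rfl := src_eq_of_path hp
      rw [mul_assoc, lstar_cons_mul_le, if_neg (fun hfe => hsrc (by rw [hfe]; exact hs)), mul_zero]
    rw [add_mul, mul_add, hPle, if_pos hs, hQle, hleP, if_pos hr, hleQ0 hr]
  · by_cases hr : G.r e ∈ H
    · -- case 2a : source not in H, range in H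
      have hQle : (∑ α ∈ hFEfin.toFinset, lpath R G α * lstar R G α) * le R G e
          = le R G e := by
        rw [Finset.sum_mul]
        rw [Finset.sum_eq_single_of_mem (⟨G.s e, [e]⟩ : Walk G)
          (hFEfin.mem_toFinset.mpr (FE_single hs hr)) ?_]
        · rw [mul_assoc, lstar_cons_mul_le, if_pos rfl, lstar_nil, lpath_mul_lv,
            rng_singleton, if_pos rfl, lpath_single]
        · intro α hα hne'
          obtain ⟨hp, hne, hsrc, hmid, hrng⟩ := hFEfin.mem_toFinset.mp hα
          obtain ⟨v, l0⟩ := α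
          obtain ⟨f, t, rfl⟩ := List.exists_cons_of_ne_nil hne
          obtain rfl := src_eq_of_path hp
          by_cases hfe : f = e
          · subst hfe
            rcases t.eq_nil_or_concat' with rfl | ⟨L, b, rfl⟩
            · exact absurd rfl hne'
            · exact absurd hr (hmid f (by
                rw [dropLast_cons_ne_nil f (by simp)]
                exact List.mem_cons_self))
          · rw [mul_assoc, lstar_cons_mul_le, if_neg hfe, mul_zero]
      rw [add_mul, mul_add, hPle, if_neg hs, hQle, hleP, if_pos hr, hleQ0 hr,
        zero_add, add_zero]
    · -- case 2b : source and range not in H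
      have hQle : (∑ α ∈ hFEfin.toFinset, lpath R G α * lstar R G α) * le R G e
          = ∑ α ∈ hFEfin.toFinset,
              if α.edges.head? = some e then
                lpath R G α * lstar R G ⟨G.r e, α.edges.tail⟩ else 0 := by
        rw [Finset.sum_mul]
        refine Finset.sum_congr rfl fun α hα => ?_
        obtain ⟨hp, hne, hsrc, hmid, hrng⟩ := hFEfin.mem_toFinset.mp hα
        obtain ⟨v, l0⟩ := α
        obtain ⟨f, t, rfl⟩ := List.exists_cons_of_ne_nil hne
        obtain rfl := src_eq_of_path hp
        change _ = if (f :: t).head? = some e then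
          lpath R G ⟨G.s f, f :: t⟩ * lstar R G ⟨G.r e, (f :: t).tail⟩ else 0
        by_cases hfe : f = e
        · rw [hfe, mul_assoc, lstar_cons_mul_le, if_pos rfl,
            if_pos (show ((e :: t : List G.E)).head? = some e from rfl)]
          rfl
        · rw [mul_assoc, lstar_cons_mul_le, if_neg hfe, mul_zero,
            if_neg (show ¬((f :: t).head? = some e) by simpa using hfe)]
      rw [add_mul, mul_add, hPle, if_neg hs, hleP, if_neg hr, hQle,
        Finset.mul_sum, Finset.sum_congr rfl hleQ, zero_add, zero_add,
        ← Finset.sum_filter, ← Finset.sum_filter]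
      refine Finset.sum_bij' (fun α _ => (⟨G.r e, α.edges.tail⟩ : Walk G))
        (fun β _ => (⟨G.s e, e :: β.edges⟩ : Walk G)) ?_ ?_ ?_ ?_ ?_
      · intro α hα
        obtain ⟨hmem, hhead⟩ := Finset.mem_filter.mp hα
        have hFE := hFEfin.mem_toFinset.mp hmem
        obtain ⟨v, l0⟩ := α
        obtain ⟨f, t, rfl⟩ := List.exists_cons_of_ne_nil hFE.2.1
        obtain rfl : f = e := by simpa using hhead
        obtain rfl := src_eq_of_path hFE.1
        exact Finset.mem_filter.mpr
          ⟨hFEfin.mem_toFinset.mpr (FE_tail hFE hr).2, rfl⟩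
      · intro β hβ
        obtain ⟨hmem, hsrcβ⟩ := Finset.mem_filter.mp hβ
        have hFE := hFEfin.mem_toFinset.mp hmem
        obtain ⟨v, l⟩ := β
        exact Finset.mem_filter.mpr
          ⟨hFEfin.mem_toFinset.mpr (FE_cons hFE hsrcβ hs hr), rfl⟩
      · intro α hα
        obtain ⟨hmem, hhead⟩ := Finset.mem_filter.mp hα
        have hFE := hFEfin.mem_toFinset.mp hmem
        obtain ⟨v, l0⟩ := α
        obtain ⟨f, t, rfl⟩ := List.exists_cons_of_ne_nil hFE.2.1
        obtain rfl : f = e := by simpa using hhead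
        obtain rfl := src_eq_of_path hFE.1
        rfl
      · intro β hβ
        obtain ⟨hmem, hsrcβ⟩ := Finset.mem_filter.mp hβ
        obtain ⟨v, l⟩ := β
        have hv : v = G.r e := hsrcβ
        subst hv
        rfl
      · intro α hα
        obtain ⟨hmem, hhead⟩ := Finset.mem_filter.mp hα
        have hFE := hFEfin.mem_toFinset.mp hmem
        obtain ⟨v, l0⟩ := α
        obtain ⟨f, t, rfl⟩ := List.exists_cons_of_ne_nil hFE.2.1
        obtain rfl : f = e := by simpa using hhead
        obtain rfl := src_eq_of_path hFE.1
        rfl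

end CE

namespace CE
variable {R : Type} [CommRing R] {G : DirGraph} {H : Set G.V}

lemma comm_lg (hHh : G.Hereditary H) (hHfin : H.Finite) (hFEfin : (G.FE H).Finite)
    (e : G.E) :
    (∑ v ∈ hHfin.toFinset, lv R G v + ∑ α ∈ hFEfin.toFinset, lpath R G α * lstar R G α)
        * lg R G e
      = lg R G e * (∑ v ∈ hHfin.toFinset, lv R G v
          + ∑ α ∈ hFEfin.toFinset, lpath R G α * lstar R G α) := by
  have hPlg : (∑ v ∈ hHfin.toFinset, lv R G v) * lg R G e
      = if G.r e ∈ H then lg R G e else 0 := by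
    rw [Finset.sum_mul, Finset.sum_congr rfl (fun v _ => lv_mul_lg R G v e),
      Finset.sum_ite_eq' hHfin.toFinset (G.r e) (fun _ => lg R G e)]
    simp only [Set.Finite.mem_toFinset]
  have hlgP : lg R G e * (∑ v ∈ hHfin.toFinset, lv R G v)
      = if G.s e ∈ H then lg R G e else 0 := by
    rw [Finset.mul_sum, Finset.sum_congr rfl (fun v _ => lg_mul_lv R G e v),
      Finset.sum_ite_eq' hHfin.toFinset (G.s e) (fun _ => lg R G e)]
    simp only [Set.Finite.mem_toFinset]
  have hQlg : ∀ α ∈ hFEfin.toFinset,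
      lpath R G α * lstar R G α * lg R G e
        = if α.src = G.r e then lpath R G α * lstar R G ⟨G.s e, e :: α.edges⟩ else 0 := by
    intro α _
    obtain ⟨v, l⟩ := α
    change lpath R G ⟨v, l⟩ * lstar R G ⟨v, l⟩ * lg R G e
      = if v = G.r e then lpath R G ⟨v, l⟩ * lstar R G ⟨G.s e, e :: l⟩ else 0
    rw [mul_assoc, lstar_mul_lg]
    by_cases h : v = G.r e
    · rw [if_pos h, if_pos h]
    · rw [if_neg h, mul_zero, if_neg h]
  have hQlg0 : G.r e ∈ H →
      (∑ α ∈ hFEfin.toFinset, lpath R G α * lstar R G α) * lg R G e = 0 := by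
    intro hr
    rw [Finset.sum_mul, Finset.sum_congr rfl hQlg]
    refine Finset.sum_eq_zero fun α hα => ?_
    have hsrc := (hFEfin.mem_toFinset.mp hα).2.2.1
    rw [if_neg (fun hv => hsrc (by rw [hv]; exact hr))]
  by_cases hs : G.s e ∈ H
  · -- case 1
    have hr : G.r e ∈ H := by
      have := hHh ⟨G.s e, [e]⟩ (path_single e) hs
      rwa [rng_singleton] at this
    have hlgQ : lg R G e * (∑ α ∈ hFEfin.toFinset, lpath R G α * lstar R G α) = 0 := by
      rw [Finset.mul_sum]
      refine Finset.sum_eq_zero fun α hα => ?_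
      obtain ⟨hp, hne, hsrc, hmid, hrng⟩ := hFEfin.mem_toFinset.mp hα
      obtain ⟨v, l0⟩ := α
      obtain ⟨f, t, rfl⟩ := List.exists_cons_of_ne_nil hne
      obtain rfl := src_eq_of_path hp
      rw [← mul_assoc, lg_mul_lpath, if_neg (fun hef => hsrc (by rw [← hef]; exact hs)),
        zero_mul]
    rw [add_mul, mul_add, hPlg, if_pos hr, hQlg0 hr, hlgP, if_pos hs, hlgQ]
  · by_cases hr : G.r e ∈ H
    · -- case 2a
      have hlgQ : lg R G e * (∑ α ∈ hFEfin.toFinset, lpath R G α * lstar R G α)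
          = lg R G e := by
        rw [Finset.mul_sum]
        rw [Finset.sum_eq_single_of_mem (⟨G.s e, [e]⟩ : Walk G)
          (hFEfin.mem_toFinset.mpr (FE_single hs hr)) ?_]
        · rw [← mul_assoc, lg_mul_lpath, if_pos rfl, lpath_nil, lv_mul_lstar,
            rng_singleton, if_pos rfl, lstar_single]
        · intro α hα hne'
          obtain ⟨hp, hne, hsrc, hmid, hrng⟩ := hFEfin.mem_toFinset.mp hα
          obtain ⟨v, l0⟩ := α
          obtain ⟨f, t, rfl⟩ := List.exists_cons_of_ne_nil hne
          obtain rfl := src_eq_of_path hp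
          by_cases hfe : e = f
          · rcases t.eq_nil_or_concat' with rfl | ⟨L, b, rfl⟩
            · exact absurd (show (⟨G.s f, [f]⟩ : Walk G) = ⟨G.s e, [e]⟩ by rw [hfe]) hne'
            · refine absurd ?_ (hmid f (by
                rw [dropLast_cons_ne_nil f (by simp)]
                exact List.mem_cons_self))
              rw [← hfe]; exact hr
          · rw [← mul_assoc, lg_mul_lpath, if_neg hfe, zero_mul]
      rw [add_mul, mul_add, hPlg, if_pos hr, hQlg0 hr, hlgP, if_neg hs, hlgQ,
        add_zero, zero_add]
    · -- case 2b
      have hlgQ : lg R G e * (∑ α ∈ hFEfin.toFinset, lpath R G α * lstar R G α)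
          = ∑ α ∈ hFEfin.toFinset,
              if α.edges.head? = some e then
                lpath R G ⟨G.r e, α.edges.tail⟩ * lstar R G α else 0 := by
        rw [Finset.mul_sum]
        refine Finset.sum_congr rfl fun α hα => ?_
        obtain ⟨hp, hne, hsrc, hmid, hrng⟩ := hFEfin.mem_toFinset.mp hα
        obtain ⟨v, l0⟩ := α
        obtain ⟨f, t, rfl⟩ := List.exists_cons_of_ne_nil hne
        obtain rfl := src_eq_of_path hp
        change _ = if (f :: t).head? = some e then
          lpath R G ⟨G.r e, (f :: t).tail⟩ * lstar R G ⟨G.s f, f :: t⟩ else 0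
        by_cases hfe : e = f
        · rw [← hfe, ← mul_assoc, lg_mul_lpath, if_pos rfl,
            if_pos (show ((e :: t : List G.E)).head? = some e from rfl)]
          rfl
        · rw [← mul_assoc, lg_mul_lpath, if_neg hfe, zero_mul,
            if_neg (show ¬((f :: t).head? = some e) by
              simpa using fun h => hfe h.symm)]
      rw [add_mul, mul_add, hPlg, if_neg hr, hlgP, if_neg hs, hlgQ,
        Finset.sum_mul, Finset.sum_congr rfl hQlg, zero_add, zero_add,
        ← Finset.sum_filter, ← Finset.sum_filter]
      refine Finset.sum_bij' (fun α _ => (⟨G.s e, e :: α.edges⟩ : Walk G))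
        (fun β _ => (⟨G.r e, β.edges.tail⟩ : Walk G)) ?_ ?_ ?_ ?_ ?_
      · intro β hβ
        obtain ⟨hmem, hsrcβ⟩ := Finset.mem_filter.mp hβ
        have hFE := hFEfin.mem_toFinset.mp hmem
        obtain ⟨v, l⟩ := β
        exact Finset.mem_filter.mpr
          ⟨hFEfin.mem_toFinset.mpr (FE_cons hFE hsrcβ hs hr), rfl⟩
      · intro α hα
        obtain ⟨hmem, hhead⟩ := Finset.mem_filter.mp hα
        have hFE := hFEfin.mem_toFinset.mp hmem
        obtain ⟨v, l0⟩ := α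
        obtain ⟨f, t, rfl⟩ := List.exists_cons_of_ne_nil hFE.2.1
        obtain rfl : f = e := by simpa using hhead
        obtain rfl := src_eq_of_path hFE.1
        exact Finset.mem_filter.mpr
          ⟨hFEfin.mem_toFinset.mpr (FE_tail hFE hr).2, rfl⟩
      · intro β hβ
        obtain ⟨hmem, hsrcβ⟩ := Finset.mem_filter.mp hβ
        obtain ⟨v, l⟩ := β
        have hv : v = G.r e := hsrcβ
        subst hv
        rfl
      · intro α hα
        obtain ⟨hmem, hhead⟩ := Finset.mem_filter.mp hα
        have hFE := hFEfin.mem_toFinset.mp hmem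
        obtain ⟨v, l0⟩ := α
        obtain ⟨f, t, rfl⟩ := List.exists_cons_of_ne_nil hFE.2.1
        obtain rfl : f = e := by simpa using hhead
        obtain rfl := src_eq_of_path hFE.1
        rfl
      · intro β hβ
        obtain ⟨hmem, hsrcβ⟩ := Finset.mem_filter.mp hβ
        obtain ⟨v, l⟩ := β
        have hv : v = G.r e := hsrcβ
        subst hv
        rfl

end CE

/-- for a finite hereditary saturated `H` satisfying Condition (F) with
`B_H = ∅` and `F_E'(H) = F_E(H)` finite, the element
`Σ_{v ∈ H} v + Σ_{α ∈ F_E(H)} αα*` is central in `L_R(E)`. -/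
theorem central_element (R : Type) [CommRing R] (G : DirGraph) (H : Set G.V)
    (hHh : G.Hereditary H) (hHs : G.Saturated H)
    (hCF : G.ConditionF H) (hBH : G.BH H = ∅)
    (hHfin : H.Finite) (hFEfin : (G.FE H).Finite) :
    ∀ b : Leavitt R G,
      (∑ v ∈ hHfin.toFinset, lv R G v +
          ∑ α ∈ hFEfin.toFinset, lpath R G α * lstar R G α) * b =
        b * (∑ v ∈ hHfin.toFinset, lv R G v +
          ∑ α ∈ hFEfin.toFinset, lpath R G α * lstar R G α) := by
  intro b
  obtain ⟨c, rfl⟩ := RingQuot.mkRingHom_surjective (LeavittRel R G) b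
  induction c using FreeAlgebra.induction with
  | grade0 r =>
    have hmap : RingQuot.mkRingHom (LeavittRel R G) (algebraMap R (FreeAlgebra R (LGen G)) r)
        = algebraMap R (Leavitt R G) r := by
      rw [← RingQuot.mkAlgHom_coe R (LeavittRel R G)]
      exact (RingQuot.mkAlgHom R (LeavittRel R G)).commutes r
    rw [hmap]
    exact (Algebra.commutes r _).symm
  | grade1 x =>
    cases x with
    | vert v => exact CE.comm_lv R hHfin hFEfin v
    | edge f => exact CE.comm_le hHh hHfin hFEfin f
    | ghost f => exact CE.comm_lg hHh hHfin hFEfin f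
  | mul x y hx hy =>
    rw [map_mul, ← mul_assoc, hx, mul_assoc, hy, ← mul_assoc]
  | add x y hx hy =>
    rw [map_add, mul_add, hx, hy, ← add_mul]
end
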